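/- arXiv:2305.10015 — 6 statements merged into one kernel-verified Lean document; each statement's English description precedes it below -/
import Mathlib

section
/- Utility bound for regression (Theorem 1). Let F be a set of measurable functions from 𝒳 to ℝ, let f̂, f̃ ∈ F, let f* ∈ F be a minimizer of R_s over F, and let f̃* ∈ F be a minimizer of R̃_s over F. Assume Φ_s(μ̂), Φ_s(f̂), Φ_s(f̃), Φ_s(f*), Φ_s(f̃*), Φ̃_s(f̃), Φ̃_s(f*), Φ̃_s(f̃*) are all finite, and let M be a constant with sup_{x∈𝒳}|μ̂(x)| ≤ M, sup_{x∈𝒳}|f̃(x)| ≤ M, sup_{x∈𝒳}|f̃*(x)| ≤ M and sup_{x∈𝒳}|f*(x)| ≤ M. Then |R_s(f̃) − R_s(f̂)| ≤ |R_s(f̂) − R_s(f*)| + |R̃_s(f̃) − R̃_s(f̃*)| + 2·M·Υ₁·√(χ²(P_X ‖ P_X̃)) + 2·Υ₂·√(Φ_s(μ̂)) + 4·Φ_s(μ̂), where Υ₁ = √(Φ̃_s(f̃)) + 2√(Φ̃_s(f̃*)) + √(Φ̃_s(f*)) and Υ₂ = √(Φ_s(f̃)) + 2√(Φ_s(f̃*))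 + √(Φ_s(f*)). -/
open MeasureTheory

private lemma cs_plain {α : Type*} [MeasurableSpace α] {ν : Measure α} {a b : α → ℝ}
    (ha : AEStronglyMeasurable a ν) (hb : AEStronglyMeasurable b ν)
    (ha2 : Integrable (fun x => a x ^ 2) ν) (hb2 : Integrable (fun x => b x ^ 2) ν) :
    |∫ x, a x * b x ∂ν| ≤ Real.sqrt (∫ x, a x ^ 2 ∂ν) * Real.sqrt (∫ x, b x ^ 2 ∂ν) := by
  have hab : Integrable (fun x => a x * b x) ν := by
    refine (ha2.add hb2).mono (ha.mul hb) ?_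
    filter_upwards with x
    simp only [Pi.add_apply, Real.norm_eq_abs]
    rw [abs_of_nonneg (by positivity : (0:ℝ) ≤ a x ^ 2 + b x ^ 2), abs_mul]
    nlinarith [sq_nonneg (|a x| - |b x|), sq_abs (a x), sq_abs (b x)]
  set A := ∫ x, a x ^ 2 ∂ν with hAdef
  set B := ∫ x, b x ^ 2 ∂ν with hBdef
  set C := ∫ x, a x * b x ∂ν with hCdef
  have hA : 0 ≤ A := integral_nonneg fun x => sq_nonneg _
  have hB : 0 ≤ B := integral_nonneg fun x => sq_nonneg _
  have key : ∀ t : ℝ, 0 ≤ B * (t * t) + (2 * C) * t + A := by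
    intro t
    have h0 : 0 ≤ ∫ x, (t * b x + a x) ^ 2 ∂ν := integral_nonneg fun x => sq_nonneg _
    have hexp : ∫ x, (t * b x + a x) ^ 2 ∂ν = t ^ 2 * B + 2 * t * C + A := by
      have heq : (fun x => (t * b x + a x) ^ 2)
          = fun x => (t ^ 2 * b x ^ 2 + 2 * t * (a x * b x)) + a x ^ 2 := by
        funext x; ring
      have iB : Integrable (fun x => t ^ 2 * b x ^ 2) ν := hb2.const_mul _
      have iC : Integrable (fun x => 2 * t * (a x * b x)) ν := hab.const_mul _
      have iBC : Integrable (fun x => t ^ 2 * b x ^ 2 + 2 * t * (a x * b x)) ν := iB.add iC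
      rw [heq, integral_add iBC ha2, integral_add iB iC, integral_const_mul,
        integral_const_mul]
    rw [hexp] at h0
    nlinarith [h0]
  have hd := discrim_le_zero key
  rw [discrim] at hd
  have hC2 : C ^ 2 ≤ A * B := by nlinarith [hd]
  calc |C| = Real.sqrt (C ^ 2) := (Real.sqrt_sq_eq_abs C).symm
    _ ≤ Real.sqrt (A * B) := Real.sqrt_le_sqrt hC2
    _ = Real.sqrt A * Real.sqrt B := Real.sqrt_mul hA B

private lemma cs_weighted {α : Type*} [MeasurableSpace α] {ν : Measure α} {u v w : α → ℝ}
    (hu : AEStronglyMeasurable u ν) (hv : AEStronglyMeasurable v ν)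
    (hw : AEStronglyMeasurable w ν) (hw0 : ∀ᵐ x ∂ν, 0 ≤ w x)
    (hu2 : Integrable (fun x => u x ^ 2 * w x) ν)
    (hv2 : Integrable (fun x => v x ^ 2 * w x) ν) :
    |∫ x, u x * v x * w x ∂ν|
      ≤ Real.sqrt (∫ x, u x ^ 2 * w x ∂ν) * Real.sqrt (∫ x, v x ^ 2 * w x ∂ν) := by
  set a : α → ℝ := fun x => u x * Real.sqrt (w x) with hadef
  set b : α → ℝ := fun x => v x * Real.sqrt (w x) with hbdef
  have hsw : AEStronglyMeasurable (fun x => Real.sqrt (w x)) ν :=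
    Real.continuous_sqrt.comp_aestronglyMeasurable hw
  have ha : AEStronglyMeasurable a ν := hu.mul hsw
  have hb : AEStronglyMeasurable b ν := hv.mul hsw
  have hae2 : (fun x => a x ^ 2) =ᵐ[ν] fun x => u x ^ 2 * w x := by
    filter_upwards [hw0] with x hx
    simp only [hadef, mul_pow, Real.sq_sqrt hx]
  have hbe2 : (fun x => b x ^ 2) =ᵐ[ν] fun x => v x ^ 2 * w x := by
    filter_upwards [hw0] with x hx
    simp only [hbdef, mul_pow, Real.sq_sqrt hx]
  have habe : (fun x => a x * b x) =ᵐ[ν] fun x => u x * v x * w x := by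
    filter_upwards [hw0] with x hx
    simp only [hadef, hbdef]
    rw [show u x * Real.sqrt (w x) * (v x * Real.sqrt (w x))
        = u x * v x * (Real.sqrt (w x) * Real.sqrt (w x)) by ring, Real.mul_self_sqrt hx]
  rw [← integral_congr_ae habe, ← integral_congr_ae hae2, ← integral_congr_ae hbe2]
  exact cs_plain ha hb (hu2.congr hae2.symm) (hv2.congr hbe2.symm)

private lemma int_mul_weighted {α : Type*} [MeasurableSpace α] {ν : Measure α} {u v w : α → ℝ}
    (hu : AEStronglyMeasurable u ν) (hv : AEStronglyMeasurable v ν)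
    (hw : AEStronglyMeasurable w ν) (hw0 : ∀ᵐ x ∂ν, 0 ≤ w x)
    (hu2 : Integrable (fun x => u x ^ 2 * w x) ν)
    (hv2 : Integrable (fun x => v x ^ 2 * w x) ν) :
    Integrable (fun x => u x * v x * w x) ν := by
  refine (hu2.add hv2).mono ((hu.mul hv).mul hw) ?_
  filter_upwards [hw0] with x hx
  simp only [Pi.add_apply, Real.norm_eq_abs]
  rw [abs_of_nonneg (by positivity : (0:ℝ) ≤ u x ^ 2 * w x + v x ^ 2 * w x), abs_mul,
    abs_of_nonneg hx, abs_mul]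
  nlinarith [sq_nonneg (|u x| - |v x|), sq_abs (u x), sq_abs (v x),
    mul_nonneg (mul_nonneg (abs_nonneg (u x)) (abs_nonneg (v x))) hx]

/-- **Utility bound for regression (Theorem 1).**
`𝒳 ⊆ ℝ^p` is measurable, `pX`, `pXt` are the densities of the original and synthetic
features, `μ`, `μhat` the original and synthetic regression functions, and the risks
satisfy `R_s(f) = Φ_s(f) + σ²`, `R̃_s(f) = Φ̃_s(f) + σ̃²` (which follows from the
data-generating mechanism `Y = μ(X) + ε`, `E[ε|X] = 0`, `E[ε²] = σ²`, and similarly for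
the synthetic data).  `fhat`, `ftil` are the models estimated from the original and
synthetic data, `fstar` minimizes `R_s` over `F`, and `ftstar` minimizes `R̃_s` over `F`. -/
theorem stmt0
    {p : ℕ} (𝒳 : Set (Fin p → ℝ)) (h𝒳 : MeasurableSet 𝒳)
    -- densities of the original and synthetic features
    (pX pXt : (Fin p → ℝ) → ℝ)
    (hpX_meas : Measurable pX) (hpXt_meas : Measurable pXt)
    (hpX_nonneg : ∀ x ∈ 𝒳, 0 ≤ pX x) (hpXt_nonneg : ∀ x ∈ 𝒳, 0 ≤ pXt x)
    (hpX_int : IntegrableOn pX 𝒳) (hpXt_int : IntegrableOn pXt 𝒳)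
    (hpX_one : (∫ x in 𝒳, pX x) = 1) (hpXt_one : (∫ x in 𝒳, pXt x) = 1)
    (hpos : ∀ x ∈ 𝒳, 0 < pX x → 0 < pXt x)
    -- regression functions
    (μ μhat : (Fin p → ℝ) → ℝ)
    (hμ : Measurable μ) (hμhat : Measurable μhat)
    -- noise variances
    (σ2 σt2 : ℝ)
    -- model class
    (F : Set ((Fin p → ℝ) → ℝ)) (hF : ∀ f ∈ F, Measurable f)
    -- risks and excess risks
    (Φs Φst Rs Rst : ((Fin p → ℝ) → ℝ) → ℝ)
    (hΦs : ∀ f, Φs f = ∫ x in 𝒳, (f x - μ x) ^ 2 * pX x)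
    (hΦst : ∀ f, Φst f = ∫ x in 𝒳, (f x - μhat x) ^ 2 * pXt x)
    (hRs : ∀ f, Rs f = Φs f + σ2)
    (hRst : ∀ f, Rst f = Φst f + σt2)
    -- estimated models and population minimizers
    (fhat ftil fstar ftstar : (Fin p → ℝ) → ℝ)
    (hfhatF : fhat ∈ F) (hftilF : ftil ∈ F) (hfstarF : fstar ∈ F) (hftstarF : ftstar ∈ F)
    (hfstar_min : ∀ f ∈ F, Rs fstar ≤ Rs f)
    (hftstar_min : ∀ f ∈ F, Rst ftstar ≤ Rst f)
    -- finiteness of the relevant excess risks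
    (hint1 : IntegrableOn (fun x => (μhat x - μ x) ^ 2 * pX x) 𝒳)
    (hint2 : IntegrableOn (fun x => (fhat x - μ x) ^ 2 * pX x) 𝒳)
    (hint3 : IntegrableOn (fun x => (ftil x - μ x) ^ 2 * pX x) 𝒳)
    (hint4 : IntegrableOn (fun x => (fstar x - μ x) ^ 2 * pX x) 𝒳)
    (hint5 : IntegrableOn (fun x => (ftstar x - μ x) ^ 2 * pX x) 𝒳)
    (hint6 : IntegrableOn (fun x => (ftil x - μhat x) ^ 2 * pXt x) 𝒳)
    (hint7 : IntegrableOn (fun x => (fstar x - μhat x) ^ 2 * pXt x) 𝒳)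
    (hint8 : IntegrableOn (fun x => (ftstar x - μhat x) ^ 2 * pXt x) 𝒳)
    -- χ²-divergence between the feature distributions, assumed finite
    (chi2 : ℝ)
    (hchi2 : chi2 = ∫ x in 𝒳, pXt x * (pX x / pXt x - 1) ^ 2)
    (hchi2_int : IntegrableOn (fun x => pXt x * (pX x / pXt x - 1) ^ 2) 𝒳)
    -- the uniform bound M
    (M : ℝ)
    (hM1 : ∀ x ∈ 𝒳, |μhat x| ≤ M) (hM2 : ∀ x ∈ 𝒳, |ftil x| ≤ M)
    (hM3 : ∀ x ∈ 𝒳, |ftstar x| ≤ M) (hM4 : ∀ x ∈ 𝒳, |fstar x| ≤ M) :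
    |Rs ftil - Rs fhat| ≤
      |Rs fhat - Rs fstar| + |Rst ftil - Rst ftstar|
        + 2 * M * (Real.sqrt (Φst ftil) + 2 * Real.sqrt (Φst ftstar) + Real.sqrt (Φst fstar))
            * Real.sqrt chi2
        + 2 * (Real.sqrt (Φs ftil) + 2 * Real.sqrt (Φs ftstar) + Real.sqrt (Φs fstar))
            * Real.sqrt (Φs μhat)
        + 4 * Φs μhat := by
  rcases Set.eq_empty_or_nonempty 𝒳 with hE | ⟨x0, hx0⟩
  · subst hE
    have hz : ∀ f : (Fin p → ℝ) → ℝ, Φs f = 0 := fun f => by rw [hΦs]; simp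
    have hzt : ∀ f : (Fin p → ℝ) → ℝ, Φst f = 0 := fun f => by rw [hΦst]; simp
    have hc : chi2 = 0 := by rw [hchi2]; simp
    simp [hRs, hRst, hz, hzt, hc]
  have hM0 : 0 ≤ M := (abs_nonneg _).trans (hM1 x0 hx0)
  have hmem : ∀ᵐ x ∂(volume.restrict 𝒳), x ∈ 𝒳 := ae_restrict_mem h𝒳
  have hwX : ∀ᵐ x ∂(volume.restrict 𝒳), 0 ≤ pX x := by
    filter_upwards [hmem] with x hx using hpX_nonneg x hx
  have hwXt : ∀ᵐ x ∂(volume.restrict 𝒳), 0 ≤ pXt x := by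
    filter_upwards [hmem] with x hx using hpXt_nonneg x hx
  have hPnn : ∀ f : (Fin p → ℝ) → ℝ, 0 ≤ ∫ x in 𝒳, (f x - μ x) ^ 2 * pX x := fun f =>
    setIntegral_nonneg h𝒳 fun x hx => mul_nonneg (sq_nonneg _) (hpX_nonneg x hx)
  have hPtnn : ∀ f : (Fin p → ℝ) → ℝ, 0 ≤ ∫ x in 𝒳, (f x - μhat x) ^ 2 * pXt x := fun f =>
    setIntegral_nonneg h𝒳 fun x hx => mul_nonneg (sq_nonneg _) (hpXt_nonneg x hx)
  have hP0 : 0 ≤ Φs μhat := by rw [hΦs]; exact hPnn μhat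
  -- integrability of (f - μhat)^2 * pX
  have key_int : ∀ f : (Fin p → ℝ) → ℝ, Measurable f →
      IntegrableOn (fun x => (f x - μ x) ^ 2 * pX x) 𝒳 →
      IntegrableOn (fun x => (f x - μhat x) ^ 2 * pX x) 𝒳 := by
    intro f hf hfi
    refine ((hfi.const_mul 2).add (hint1.const_mul 2)).mono
      ((((hf.sub hμhat).pow_const 2).mul hpX_meas).aestronglyMeasurable) ?_
    filter_upwards [hwX] with x hx
    simp only [Pi.add_apply, Real.norm_eq_abs]
    rw [abs_of_nonneg (by positivity :
      (0:ℝ) ≤ 2 * ((f x - μ x) ^ 2 * pX x) + 2 * ((μhat x - μ x) ^ 2 * pX x)),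
      abs_of_nonneg (by positivity : (0:ℝ) ≤ (f x - μhat x) ^ 2 * pX x)]
    nlinarith [sq_nonneg ((f x - μ x) + (μhat x - μ x)), hx,
      mul_le_mul_of_nonneg_right
        (by nlinarith [sq_nonneg ((f x - μ x) + (μhat x - μ x))] :
          (f x - μhat x) ^ 2 ≤ 2 * (f x - μ x) ^ 2 + 2 * (μhat x - μ x) ^ 2) hx]
  -- Step A : comparing excess risks w.r.t. μ and μhat under pX
  have stepA : ∀ f : (Fin p → ℝ) → ℝ, Measurable f →
      IntegrableOn (fun x => (f x - μ x) ^ 2 * pX x) 𝒳 →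
      IntegrableOn (fun x => (f x - μhat x) ^ 2 * pX x) 𝒳 →
      |(∫ x in 𝒳, (f x - μ x) ^ 2 * pX x) - ∫ x in 𝒳, (f x - μhat x) ^ 2 * pX x|
        ≤ (Real.sqrt (∫ x in 𝒳, (f x - μ x) ^ 2 * pX x)
            + Real.sqrt (∫ x in 𝒳, (f x - μhat x) ^ 2 * pX x)) * Real.sqrt (Φs μhat) := by
    intro f hf hA hB
    have hi1 : Integrable (fun x => (f x - μ x) * (μhat x - μ x) * pX x) (volume.restrict 𝒳) :=
      int_mul_weighted (hf.sub hμ).aestronglyMeasurable (hμhat.sub hμ).aestronglyMeasurable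
        hpX_meas.aestronglyMeasurable hwX hA hint1
    have hi2 : Integrable (fun x => (f x - μhat x) * (μhat x - μ x) * pX x)
        (volume.restrict 𝒳) :=
      int_mul_weighted (hf.sub hμhat).aestronglyMeasurable (hμhat.sub hμ).aestronglyMeasurable
        hpX_meas.aestronglyMeasurable hwX hB hint1
    have hdiff : (∫ x in 𝒳, (f x - μ x) ^ 2 * pX x) - ∫ x in 𝒳, (f x - μhat x) ^ 2 * pX x
        = (∫ x in 𝒳, (f x - μ x) * (μhat x - μ x) * pX x)
          + ∫ x in 𝒳, (f x - μhat x) * (μhat x - μ x) * pX x := by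
      rw [← integral_add hi1 hi2, ← integral_sub hA hB]
      apply integral_congr_ae
      filter_upwards with x
      ring
    have hc1 := cs_weighted (hf.sub hμ).aestronglyMeasurable
      (hμhat.sub hμ).aestronglyMeasurable hpX_meas.aestronglyMeasurable hwX hA hint1
    have hc2 := cs_weighted (hf.sub hμhat).aestronglyMeasurable
      (hμhat.sub hμ).aestronglyMeasurable hpX_meas.aestronglyMeasurable hwX hB hint1
    rw [hdiff, hΦs]
    calc |(∫ x in 𝒳, (f x - μ x) * (μhat x - μ x) * pX x)
          + ∫ x in 𝒳, (f x - μhat x) * (μhat x - μ x) * pX x|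
        ≤ |∫ x in 𝒳, (f x - μ x) * (μhat x - μ x) * pX x|
          + |∫ x in 𝒳, (f x - μhat x) * (μhat x - μ x) * pX x| := abs_add_le _ _
      _ ≤ Real.sqrt (∫ x in 𝒳, (f x - μ x) ^ 2 * pX x)
            * Real.sqrt (∫ x in 𝒳, (μhat x - μ x) ^ 2 * pX x)
          + Real.sqrt (∫ x in 𝒳, (f x - μhat x) ^ 2 * pX x)
            * Real.sqrt (∫ x in 𝒳, (μhat x - μ x) ^ 2 * pX x) := add_le_add hc1 hc2
      _ = _ := by ring
  -- Step Tri : triangle inequality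
  have stepTri : ∀ f : (Fin p → ℝ) → ℝ, Measurable f →
      IntegrableOn (fun x => (f x - μ x) ^ 2 * pX x) 𝒳 →
      IntegrableOn (fun x => (f x - μhat x) ^ 2 * pX x) 𝒳 →
      Real.sqrt (∫ x in 𝒳, (f x - μhat x) ^ 2 * pX x)
        ≤ Real.sqrt (∫ x in 𝒳, (f x - μ x) ^ 2 * pX x) + Real.sqrt (Φs μhat) := by
    intro f hf hA hB
    have hA0 : 0 ≤ ∫ x in 𝒳, (f x - μ x) ^ 2 * pX x := hPnn f
    have hi1 : Integrable (fun x => (f x - μ x) * (μhat x - μ x) * pX x) (volume.restrict 𝒳) :=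
      int_mul_weighted (hf.sub hμ).aestronglyMeasurable (hμhat.sub hμ).aestronglyMeasurable
        hpX_meas.aestronglyMeasurable hwX hA hint1
    have hc1 := cs_weighted (hf.sub hμ).aestronglyMeasurable
      (hμhat.sub hμ).aestronglyMeasurable hpX_meas.aestronglyMeasurable hwX hA hint1
    have hi1' : Integrable (fun x => 2 * ((f x - μ x) * (μhat x - μ x) * pX x))
        (volume.restrict 𝒳) := hi1.const_mul 2
    have hexp : (∫ x in 𝒳, (f x - μhat x) ^ 2 * pX x)
        = (∫ x in 𝒳, (f x - μ x) ^ 2 * pX x)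
          - 2 * (∫ x in 𝒳, (f x - μ x) * (μhat x - μ x) * pX x) + Φs μhat := by
      have iS : Integrable (fun x => (f x - μ x) ^ 2 * pX x
          - 2 * ((f x - μ x) * (μhat x - μ x) * pX x)) (volume.restrict 𝒳) := hA.sub hi1'
      have e : (∫ x in 𝒳, (f x - μhat x) ^ 2 * pX x)
          = ∫ x in 𝒳, ((f x - μ x) ^ 2 * pX x
              - 2 * ((f x - μ x) * (μhat x - μ x) * pX x) + (μhat x - μ x) ^ 2 * pX x) := by
        apply integral_congr_ae
        filter_upwards with x
        ring
      rw [e, integral_add iS hint1, integral_sub hA hi1', integral_const_mul, hΦs]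
    have hPs : Φs μhat = ∫ x in 𝒳, (μhat x - μ x) ^ 2 * pX x := hΦs μhat
    simp only [Pi.sub_apply, ← hPs] at hc1
    have hBle : (∫ x in 𝒳, (f x - μhat x) ^ 2 * pX x)
        ≤ (Real.sqrt (∫ x in 𝒳, (f x - μ x) ^ 2 * pX x) + Real.sqrt (Φs μhat)) ^ 2 := by
      have hsq : (Real.sqrt (∫ x in 𝒳, (f x - μ x) ^ 2 * pX x) + Real.sqrt (Φs μhat)) ^ 2
          = (∫ x in 𝒳, (f x - μ x) ^ 2 * pX x)
            + 2 * (Real.sqrt (∫ x in 𝒳, (f x - μ x) ^ 2 * pX x) * Real.sqrt (Φs μhat))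
            + Φs μhat := by
        rw [add_sq, Real.sq_sqrt hA0, Real.sq_sqrt hP0]
        ring
      have habs := neg_abs_le (∫ x in 𝒳, (f x - μ x) * (μhat x - μ x) * pX x)
      rw [hexp, hsq]
      nlinarith [hc1, habs]
    calc Real.sqrt (∫ x in 𝒳, (f x - μhat x) ^ 2 * pX x)
        ≤ Real.sqrt ((Real.sqrt (∫ x in 𝒳, (f x - μ x) ^ 2 * pX x)
            + Real.sqrt (Φs μhat)) ^ 2) := Real.sqrt_le_sqrt hBle
      _ = _ := Real.sqrt_sq (by positivity)
  -- Step B : change of measure via chi-square divergence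
  have stepB : ∀ f : (Fin p → ℝ) → ℝ, Measurable f → (∀ x ∈ 𝒳, |f x| ≤ M) →
      IntegrableOn (fun x => (f x - μhat x) ^ 2 * pX x) 𝒳 →
      IntegrableOn (fun x => (f x - μhat x) ^ 2 * pXt x) 𝒳 →
      |(∫ x in 𝒳, (f x - μhat x) ^ 2 * pX x) - ∫ x in 𝒳, (f x - μhat x) ^ 2 * pXt x|
        ≤ 2 * M * Real.sqrt (∫ x in 𝒳, (f x - μhat x) ^ 2 * pXt x) * Real.sqrt chi2 := by
    intro f hf hfM hBX hBXt
    have hvmeas : Measurable fun x => (f x - μhat x) * (pX x / pXt x - 1) :=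
      (hf.sub hμhat).mul ((hpX_meas.div hpXt_meas).sub measurable_const)
    have hbound : ∀ᵐ x ∂(volume.restrict 𝒳),
        ‖((f x - μhat x) * (pX x / pXt x - 1)) ^ 2 * pXt x‖
          ≤ ‖4 * M ^ 2 * (pXt x * (pX x / pXt x - 1) ^ 2)‖ := by
      filter_upwards [hmem, hwXt] with x hx hxt
      have h1 : |f x - μhat x| ≤ 2 * M := by
        calc |f x - μhat x| ≤ |f x| + |μhat x| := abs_sub _ _
          _ ≤ 2 * M := by linarith [hfM x hx, hM1 x hx]
      have h2 : (f x - μhat x) ^ 2 ≤ 4 * M ^ 2 := by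
        nlinarith [sq_abs (f x - μhat x), abs_nonneg (f x - μhat x)]
      simp only [Real.norm_eq_abs]
      rw [abs_of_nonneg (by positivity : (0:ℝ) ≤ ((f x - μhat x) * (pX x / pXt x - 1)) ^ 2 * pXt x),
        abs_of_nonneg (by positivity : (0:ℝ) ≤ 4 * M ^ 2 * (pXt x * (pX x / pXt x - 1) ^ 2))]
      have := mul_le_mul_of_nonneg_right h2
        (mul_nonneg hxt (sq_nonneg (pX x / pXt x - 1)))
      nlinarith [this]
    have hv2int : Integrable
        (fun x => ((f x - μhat x) * (pX x / pXt x - 1)) ^ 2 * pXt x) (volume.restrict 𝒳) := by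
      refine (hchi2_int.const_mul (4 * M ^ 2)).mono
        (((hvmeas.pow_const 2).mul hpXt_meas).aestronglyMeasurable) hbound
    have hv2le : (∫ x in 𝒳, ((f x - μhat x) * (pX x / pXt x - 1)) ^ 2 * pXt x)
        ≤ 4 * M ^ 2 * chi2 := by
      have hmono := integral_mono_ae hv2int (hchi2_int.const_mul (4 * M ^ 2)) ?_
      · rw [integral_const_mul] at hmono
        rw [hchi2]
        exact hmono
      · filter_upwards [hbound, hwXt] with x hx hxt
        have h0 : (0:ℝ) ≤ ((f x - μhat x) * (pX x / pXt x - 1)) ^ 2 * pXt x := by positivity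
        have h1 : (0:ℝ) ≤ 4 * M ^ 2 * (pXt x * (pX x / pXt x - 1) ^ 2) := by positivity
        simp only [Real.norm_eq_abs, abs_of_nonneg h0, abs_of_nonneg h1] at hx
        exact hx
    have hdiff : (∫ x in 𝒳, (f x - μhat x) ^ 2 * pX x) - ∫ x in 𝒳, (f x - μhat x) ^ 2 * pXt x
        = ∫ x in 𝒳, (f x - μhat x) * ((f x - μhat x) * (pX x / pXt x - 1)) * pXt x := by
      rw [← integral_sub hBX hBXt]
      apply integral_congr_ae
      filter_upwards [hmem] with x hx
      by_cases hz : pXt x = 0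
      · have hpx : pX x = 0 := by
          by_contra h
          have hlt : 0 < pX x := lt_of_le_of_ne (hpX_nonneg x hx) (Ne.symm h)
          have := hpos x hx hlt
          rw [hz] at this
          exact lt_irrefl 0 this
        simp [hz, hpx]
      · field_simp
    have hcs := cs_weighted (hf.sub hμhat).aestronglyMeasurable hvmeas.aestronglyMeasurable
      hpXt_meas.aestronglyMeasurable hwXt hBXt hv2int
    have h2 : Real.sqrt (∫ x in 𝒳, ((f x - μhat x) * (pX x / pXt x - 1)) ^ 2 * pXt x)
        ≤ 2 * M * Real.sqrt chi2 := by
      calc Real.sqrt (∫ x in 𝒳, ((f x - μhat x) * (pX x / pXt x - 1)) ^ 2 * pXt x)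
          ≤ Real.sqrt (4 * M ^ 2 * chi2) := Real.sqrt_le_sqrt hv2le
        _ = Real.sqrt (4 * M ^ 2) * Real.sqrt chi2 := Real.sqrt_mul (by positivity) _
        _ = 2 * M * Real.sqrt chi2 := by
            rw [show (4:ℝ) * M ^ 2 = (2 * M) ^ 2 by ring, Real.sqrt_sq (by positivity)]
    rw [hdiff]
    calc |∫ x in 𝒳, (f x - μhat x) * ((f x - μhat x) * (pX x / pXt x - 1)) * pXt x|
        ≤ Real.sqrt (∫ x in 𝒳, (f x - μhat x) ^ 2 * pXt x)
          * Real.sqrt (∫ x in 𝒳, ((f x - μhat x) * (pX x / pXt x - 1)) ^ 2 * pXt x) := hcs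
      _ ≤ Real.sqrt (∫ x in 𝒳, (f x - μhat x) ^ 2 * pXt x) * (2 * M * Real.sqrt chi2) :=
          mul_le_mul_of_nonneg_left h2 (Real.sqrt_nonneg _)
      _ = 2 * M * Real.sqrt (∫ x in 𝒳, (f x - μhat x) ^ 2 * pXt x) * Real.sqrt chi2 := by ring
  -- integrability of the B-quantities
  have IB1 : IntegrableOn (fun x => (ftil x - μhat x) ^ 2 * pX x) 𝒳 :=
    key_int ftil (hF ftil hftilF) hint3
  have IB2 : IntegrableOn (fun x => (fstar x - μhat x) ^ 2 * pX x) 𝒳 :=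
    key_int fstar (hF fstar hfstarF) hint4
  -- specialize
  have sA1 := stepA ftil (hF ftil hftilF) hint3 IB1
  have sA2 := stepA fstar (hF fstar hfstarF) hint4 IB2
  have sT1 := stepTri ftil (hF ftil hftilF) hint3 IB1
  have sT2 := stepTri fstar (hF fstar hfstarF) hint4 IB2
  have sB1 := stepB ftil (hF ftil hftilF) hM2 IB1 hint6
  have sB2 := stepB fstar (hF fstar hfstarF) hM4 IB2 hint7
  rw [← hΦs ftil] at sA1 sT1
  rw [← hΦs fstar] at sA2 sT2
  rw [← hΦst ftil] at sB1
  rw [← hΦst fstar] at sB2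
  -- minimizer facts
  have hmin1 : Φs fstar ≤ Φs ftil := by
    have := hfstar_min ftil hftilF
    rw [hRs, hRs] at this
    linarith
  have hmin0 : Φs fstar ≤ Φs fhat := by
    have := hfstar_min fhat hfhatF
    rw [hRs, hRs] at this
    linarith
  have hmin2 : Φst ftstar ≤ Φst fstar := by
    have := hftstar_min fstar hfstarF
    rw [hRst, hRst] at this
    linarith
  have hRstdiff : Φst ftil - Φst ftstar ≤ |Rst ftil - Rst ftstar| := by
    rw [hRst, hRst]
    have := le_abs_self (Φst ftil + σt2 - (Φst ftstar + σt2))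
    linarith
  -- multiplied triangle inequalities
  have hsP : Real.sqrt (Φs μhat) * Real.sqrt (Φs μhat) = Φs μhat := Real.mul_self_sqrt hP0
  have m1 : Real.sqrt (∫ x in 𝒳, (ftil x - μhat x) ^ 2 * pX x) * Real.sqrt (Φs μhat)
      ≤ Real.sqrt (Φs ftil) * Real.sqrt (Φs μhat) + Φs μhat := by
    have := mul_le_mul_of_nonneg_right sT1 (Real.sqrt_nonneg (Φs μhat))
    rw [add_mul, hsP] at this
    exact this
  have m2 : Real.sqrt (∫ x in 𝒳, (fstar x - μhat x) ^ 2 * pX x) * Real.sqrt (Φs μhat)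
      ≤ Real.sqrt (Φs fstar) * Real.sqrt (Φs μhat) + Φs μhat := by
    have := mul_le_mul_of_nonneg_right sT2 (Real.sqrt_nonneg (Φs μhat))
    rw [add_mul, hsP] at this
    exact this
  -- abs bounds from stepA / stepB as two-sided inequalities
  have a1 := (abs_le.mp sA1).2
  have a1' := (abs_le.mp sA1).1
  have a2 := (abs_le.mp sA2).2
  have a2' := (abs_le.mp sA2).1
  have b1 := (abs_le.mp sB1).2
  have b1' := (abs_le.mp sB1).1
  have b2 := (abs_le.mp sB2).2
  have b2' := (abs_le.mp sB2).1
  -- the key excess-risk bound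
  have main : Φs ftil - Φs fstar
      ≤ |Rst ftil - Rst ftstar|
        + 2 * M * Real.sqrt (Φst ftil) * Real.sqrt chi2
        + 2 * M * Real.sqrt (Φst fstar) * Real.sqrt chi2
        + 2 * (Real.sqrt (Φs ftil) * Real.sqrt (Φs μhat))
        + 2 * (Real.sqrt (Φs fstar) * Real.sqrt (Φs μhat))
        + 2 * Φs μhat := by linarith [a1, a2, b1, b2, m1, m2, hmin2, hRstdiff]
  -- final assembly
  have hgoal1 : |Rs ftil - Rs fhat| ≤ |Rs fhat - Rs fstar| + (Φs ftil - Φs fstar) := by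
    rw [hRs, hRs, hRs]
    have e1 : Φs fhat + σ2 - (Φs fstar + σ2) = Φs fhat - Φs fstar := by ring
    rw [e1, abs_of_nonneg (by linarith : (0:ℝ) ≤ Φs fhat - Φs fstar)]
    rw [abs_le]
    constructor
    · linarith
    · linarith
  have n1 : 0 ≤ M * (Real.sqrt (Φst ftstar) * Real.sqrt chi2) :=
    mul_nonneg hM0 (mul_nonneg (Real.sqrt_nonneg _) (Real.sqrt_nonneg _))
  have n2 : 0 ≤ Real.sqrt (Φs ftstar) * Real.sqrt (Φs μhat) :=
    mul_nonneg (Real.sqrt_nonneg _) (Real.sqrt_nonneg _)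
  linarith [hgoal1, main, n1, n2, hP0]
end

section
/- Utility bound for classification (Theorem 2). Let G be a set of measurable functions from 𝒳 to ℝ, let ĝ, g̃ ∈ G, let g*_G ∈ G be a minimizer of R_{0-1} over G, and let g̃*_G ∈ G be a minimizer of R̃_{0-1} over G. Then |R_{0-1}(g̃) − R_{0-1}(ĝ)| ≤ |R_{0-1}(ĝ) − R_{0-1}(g*_G)| + |R̃_{0-1}(g̃) − R̃_{0-1}(g̃*_G)| + Υ₃·√(χ²(P_X ‖ P_X̃)) + 2·‖η̂ − η‖_{L²(P_X)}·(C(g*_G) + 2·C(g̃*_G) + C(g̃)) + 4·Φ_{0-1}(g_{η̂}), where Υ₃ = √(Φ̃_{0-1}(g*_G)) + 2√(Φ̃_{0-1}(g̃*_G)) + √(Φ̃_{0-1}(g̃)), C(g) = √(P(sign(g(X)) ≠ sign(η̂(X) − 1/2))), and g_{η̂}(x) = η̂(x) − 1/2 is the plug-in classifier built from η̂. -/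
open MeasureTheory

open MeasureTheory

lemma my_cs {α : Type*} [MeasurableSpace α] (μ : Measure α) (u v : α → ℝ)
    (hu : Integrable (fun x => u x ^ 2) μ) (hv : Integrable (fun x => v x ^ 2) μ)
    (huv : Integrable (fun x => u x * v x) μ) :
    |∫ x, u x * v x ∂μ| ≤ Real.sqrt (∫ x, u x ^ 2 ∂μ) * Real.sqrt (∫ x, v x ^ 2 ∂μ) := by
  set A := ∫ x, u x ^ 2 ∂μ with hA_def
  set B := ∫ x, u x * v x ∂μ with hB_def
  set C := ∫ x, v x ^ 2 ∂μ with hC_def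
  have hA : 0 ≤ A := integral_nonneg fun x => sq_nonneg _
  have hC : 0 ≤ C := integral_nonneg fun x => sq_nonneg _
  have key : ∀ t : ℝ, 0 ≤ C * (t * t) + (2 * B) * t + A := by
    intro t
    have h1 : (fun x => (t * v x + u x) ^ 2)
        = fun x => t ^ 2 * v x ^ 2 + 2 * t * (u x * v x) + u x ^ 2 := by
      funext x; ring
    have h2 : 0 ≤ ∫ x, (t * v x + u x) ^ 2 ∂μ := integral_nonneg fun x => sq_nonneg _
    have i1 : Integrable (fun x => t ^ 2 * v x ^ 2) μ := hv.const_mul _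
    have i2 : Integrable (fun x => 2 * t * (u x * v x)) μ := huv.const_mul _
    have i12 : Integrable (fun x => t ^ 2 * v x ^ 2 + 2 * t * (u x * v x)) μ := by
      exact i1.add i2
    rw [h1, integral_add i12 hu, integral_add i1 i2, integral_const_mul,
        integral_const_mul] at h2
    nlinarith [h2]
  have hd := discrim_le_zero key
  rw [discrim] at hd
  have hB2 : B ^ 2 ≤ A * C := by nlinarith
  calc |B| = Real.sqrt (B ^ 2) := (Real.sqrt_sq_eq_abs B).symm
    _ ≤ Real.sqrt (A * C) := Real.sqrt_le_sqrt hB2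
    _ = Real.sqrt A * Real.sqrt C := Real.sqrt_mul hA C

lemma ptw_tri1 (A B C : Prop) [Decidable A] [Decidable B] [Decidable C] {w : ℝ} (hw : 0 ≤ w) :
    (if A ↔ C then (0:ℝ) else w) ≤ (if A ↔ B then (0:ℝ) else w) + (if B ↔ C then (0:ℝ) else w) := by
  split_ifs <;> first | linarith | tauto

lemma ptw_tri2 (A B C : Prop) [Decidable A] [Decidable B] [Decidable C] {w : ℝ} (hw : 0 ≤ w) :
    (if A ↔ B then (0:ℝ) else w) ≤ (if A ↔ C then (0:ℝ) else w) + (if B ↔ C then (0:ℝ) else w) := by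
  split_ifs <;> first | linarith | tauto

lemma ptw_if_le (c : Prop) [Decidable c] {w w1 w2 : ℝ} (h : w ≤ w1 + w2) (h1 : 0 ≤ w1) (h2 : 0 ≤ w2) :
    (if c then (0:ℝ) else w) ≤ (if c then (0:ℝ) else w1) + (if c then (0:ℝ) else w2) := by
  split_ifs <;> linarith

lemma ptw_risk_excess (t t' e : ℝ) :
    ((if 0 ≤ t then 1 - e else e) - (if 0 ≤ t' then 1 - e else e)) =
      ((if (0 ≤ t) ↔ (0 ≤ e - 1 / 2) then (0:ℝ) else |2 * e - 1|)
        - (if (0 ≤ t') ↔ (0 ≤ e - 1 / 2) then (0:ℝ) else |2 * e - 1|)) := by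
  rcases le_or_gt 0 (e - 1 / 2) with h | h
  · rw [abs_of_nonneg (by linarith : (0:ℝ) ≤ 2 * e - 1)]
    simp only [h, iff_true]
    split_ifs <;> linarith
  · rw [abs_of_neg (by linarith : (2 * e - 1 : ℝ) < 0)]
    simp only [show ¬((0:ℝ) ≤ e - 1 / 2) from not_le.mpr h, iff_false]
    split_ifs <;> linarith
open MeasureTheory

lemma meas_iff {α : Type*} [MeasurableSpace α] {g h : α → ℝ} (hg : Measurable g)
    (hh : Measurable h) : MeasurableSet {x | (0 ≤ g x) ↔ (0 ≤ h x)} := by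
  have h1 : MeasurableSet {x | 0 ≤ g x} := measurableSet_le measurable_const hg
  have h2 : MeasurableSet {x | 0 ≤ h x} := measurableSet_le measurable_const hh
  have : {x | (0 ≤ g x) ↔ (0 ≤ h x)}
      = ({x | 0 ≤ g x} ∩ {x | 0 ≤ h x}) ∪ ({x | 0 ≤ g x}ᶜ ∩ {x | 0 ≤ h x}ᶜ) := by
    ext x
    simp only [Set.mem_setOf_eq, Set.mem_union, Set.mem_inter_iff, Set.mem_compl_iff]
    tauto
  rw [this]
  exact (h1.inter h2).union (h1.compl.inter h2.compl)

lemma meas_if {α : Type*} [MeasurableSpace α] {g h w : α → ℝ} (hg : Measurable g)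
    (hh : Measurable h) (hw : Measurable w) :
    Measurable (fun x => if (0 ≤ g x) ↔ (0 ≤ h x) then (0:ℝ) else w x) :=
  Measurable.ite (meas_iff hg hh) measurable_const hw

lemma int_helper {α : Type*} [MeasurableSpace α] {μ : Measure α} {s : Set α}
    (hs : MeasurableSet s) {d : α → ℝ} (hd_meas : Measurable d)
    (hd_nonneg : ∀ x ∈ s, 0 ≤ d x) (hd_int : IntegrableOn d s μ)
    {F : α → ℝ} (hF : Measurable F) {M : ℝ} (hM : ∀ x ∈ s, |F x| ≤ M) :
    IntegrableOn (fun x => F x * d x) s μ := by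
  apply Integrable.mono' (hd_int.const_mul M) ((hF.mul hd_meas).aestronglyMeasurable)
  filter_upwards [ae_restrict_mem hs] with x hx
  have h0 := hd_nonneg x hx
  have : ‖F x * d x‖ = |F x| * d x := by
    rw [Real.norm_eq_abs, abs_mul, abs_of_nonneg h0]
  rw [Pi.mul_apply, this]
  exact mul_le_mul_of_nonneg_right (hM x hx) h0

/-- **Utility bound for classification (Theorem 2).**
`sign(t) = 1` when `t ≥ 0` and `−1` otherwise; the 0-1 risk of `g` under the original
distribution (with `P(Z = 1 | X = x) = η(x)`) is
`R_{0-1}(g) = ∫ (if sign(g x) = 1 then 1 − η x else η x) p_X`, and likewise for the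
synthetic distribution with `η̂` and `p_X̃`.  `ghat`, `gtil` are the classifiers estimated
from original and synthetic data, `gstar` minimizes `R_{0-1}` over `G` and `gtstar`
minimizes `R̃_{0-1}` over `G`. -/
theorem stmt1
    {p : ℕ} (𝒳 : Set (Fin p → ℝ)) (h𝒳 : MeasurableSet 𝒳)
    -- densities of the original and synthetic features
    (pX pXt : (Fin p → ℝ) → ℝ)
    (hpX_meas : Measurable pX) (hpXt_meas : Measurable pXt)
    (hpX_nonneg : ∀ x ∈ 𝒳, 0 ≤ pX x) (hpXt_nonneg : ∀ x ∈ 𝒳, 0 ≤ pXt x)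
    (hpX_int : IntegrableOn pX 𝒳) (hpXt_int : IntegrableOn pXt 𝒳)
    (hpX_one : (∫ x in 𝒳, pX x) = 1) (hpXt_one : (∫ x in 𝒳, pXt x) = 1)
    (hpos : ∀ x ∈ 𝒳, 0 < pX x → 0 < pXt x)
    -- regression functions (conditional probabilities of label 1)
    (η ηhat : (Fin p → ℝ) → ℝ)
    (hη : Measurable η) (hηhat : Measurable ηhat)
    (hη01 : ∀ x ∈ 𝒳, η x ∈ Set.Icc (0 : ℝ) 1) (hηhat01 : ∀ x ∈ 𝒳, ηhat x ∈ Set.Icc (0 : ℝ) 1)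
    -- model class
    (G : Set ((Fin p → ℝ) → ℝ)) (hG : ∀ g ∈ G, Measurable g)
    -- risks, excess risks and the quantity C(g)
    (R01 Rt01 Φ01 Φt01 Cg : ((Fin p → ℝ) → ℝ) → ℝ)
    (hR01 : ∀ g, R01 g = ∫ x in 𝒳, (if 0 ≤ g x then 1 - η x else η x) * pX x)
    (hRt01 : ∀ g, Rt01 g = ∫ x in 𝒳, (if 0 ≤ g x then 1 - ηhat x else ηhat x) * pXt x)
    (hΦ01 : ∀ g, Φ01 g =
      ∫ x in 𝒳, (if (0 ≤ g x) ↔ (0 ≤ η x - 1 / 2) then (0 : ℝ) else |2 * η x - 1|) * pX x)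
    (hΦt01 : ∀ g, Φt01 g =
      ∫ x in 𝒳, (if (0 ≤ g x) ↔ (0 ≤ ηhat x - 1 / 2) then (0 : ℝ) else |2 * ηhat x - 1|) * pXt x)
    (hCg : ∀ g, Cg g = Real.sqrt
      (∫ x in 𝒳, (if (0 ≤ g x) ↔ (0 ≤ ηhat x - 1 / 2) then (0 : ℝ) else 1) * pX x))
    -- estimated models and population minimizers
    (ghat gtil gstar gtstar : (Fin p → ℝ) → ℝ)
    (hghatG : ghat ∈ G) (hgtilG : gtil ∈ G) (hgstarG : gstar ∈ G) (hgtstarG : gtstar ∈ G)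
    (hgstar_min : ∀ g ∈ G, R01 gstar ≤ R01 g)
    (hgtstar_min : ∀ g ∈ G, Rt01 gtstar ≤ Rt01 g)
    -- χ²-divergence between the feature distributions, assumed finite
    (chi2 : ℝ)
    (hchi2 : chi2 = ∫ x in 𝒳, pXt x * (pX x / pXt x - 1) ^ 2)
    (hchi2_int : IntegrableOn (fun x => pXt x * (pX x / pXt x - 1) ^ 2) 𝒳) :
    |R01 gtil - R01 ghat| ≤
      |R01 ghat - R01 gstar| + |Rt01 gtil - Rt01 gtstar|
        + (Real.sqrt (Φt01 gstar) + 2 * Real.sqrt (Φt01 gtstar) + Real.sqrt (Φt01 gtil))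
            * Real.sqrt chi2
        + 2 * Real.sqrt (∫ x in 𝒳, (ηhat x - η x) ^ 2 * pX x)
            * (Cg gstar + 2 * Cg gtstar + Cg gtil)
        + 4 * Φ01 (fun x => ηhat x - 1 / 2) := by
  have hgtil := hG gtil hgtilG
  have hgstar := hG gstar hgstarG
  have hgtstar := hG gtstar hgtstarG
  have hghat := hG ghat hghatG
  have hηh2 : Measurable (fun x => ηhat x - 1 / 2) := hηhat.sub measurable_const
  have hη2 : Measurable (fun x => η x - 1 / 2) := hη.sub measurable_const
  have hwη : Measurable (fun x => |2 * η x - 1|) := ((hη.const_mul 2).sub measurable_const).abs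
  have hwηh : Measurable (fun x => |2 * ηhat x - 1|) :=
    ((hηhat.const_mul 2).sub measurable_const).abs
  have b1 : ∀ x ∈ 𝒳, |2 * η x - 1| ≤ 1 := fun x hx => by
    obtain ⟨h0, h1⟩ := hη01 x hx; rw [abs_le]; constructor <;> linarith
  have b2 : ∀ x ∈ 𝒳, |2 * ηhat x - 1| ≤ 1 := fun x hx => by
    obtain ⟨h0, h1⟩ := hηhat01 x hx; rw [abs_le]; constructor <;> linarith
  have b3 : ∀ x ∈ 𝒳, |ηhat x - η x| ≤ 1 := fun x hx => by
    obtain ⟨h0, h1⟩ := hη01 x hx; obtain ⟨h2, h3⟩ := hηhat01 x hx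
    rw [abs_le]; constructor <;> linarith
  -- integrability facts
  have iR : ∀ g : (Fin p → ℝ) → ℝ, Measurable g →
      IntegrableOn (fun x => (if 0 ≤ g x then 1 - η x else η x) * pX x) 𝒳 := fun g hg =>
    int_helper h𝒳 hpX_meas hpX_nonneg hpX_int
      (Measurable.ite (measurableSet_le measurable_const hg) (measurable_const.sub hη) hη)
      (M := 1) (fun x hx => by
        obtain ⟨h0, h1⟩ := hη01 x hx
        split_ifs <;> rw [abs_le] <;> constructor <;> linarith)
  have iRt : ∀ g : (Fin p → ℝ) → ℝ, Measurable g →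
      IntegrableOn (fun x => (if 0 ≤ g x then 1 - ηhat x else ηhat x) * pXt x) 𝒳 := fun g hg =>
    int_helper h𝒳 hpXt_meas hpXt_nonneg hpXt_int
      (Measurable.ite (measurableSet_le measurable_const hg) (measurable_const.sub hηhat) hηhat)
      (M := 1) (fun x hx => by
        obtain ⟨h0, h1⟩ := hηhat01 x hx
        split_ifs <;> rw [abs_le] <;> constructor <;> linarith)
  have iΦ : ∀ g : (Fin p → ℝ) → ℝ, Measurable g →
      IntegrableOn (fun x =>
        (if (0 ≤ g x) ↔ (0 ≤ η x - 1 / 2) then (0:ℝ) else |2 * η x - 1|) * pX x) 𝒳 := fun g hg =>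
    int_helper h𝒳 hpX_meas hpX_nonneg hpX_int (meas_if hg hη2 hwη) (M := 1) (fun x hx => by
      split_ifs
      · simp
      · rw [abs_abs]; exact b1 x hx)
  have iΦt : ∀ g : (Fin p → ℝ) → ℝ, Measurable g →
      IntegrableOn (fun x =>
        (if (0 ≤ g x) ↔ (0 ≤ ηhat x - 1 / 2) then (0:ℝ) else |2 * ηhat x - 1|) * pXt x) 𝒳 :=
    fun g hg =>
    int_helper h𝒳 hpXt_meas hpXt_nonneg hpXt_int (meas_if hg hηh2 hwηh) (M := 1) (fun x hx => by
      split_ifs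
      · simp
      · rw [abs_abs]; exact b2 x hx)
  have iH : ∀ g : (Fin p → ℝ) → ℝ, Measurable g →
      IntegrableOn (fun x =>
        (if (0 ≤ g x) ↔ (0 ≤ ηhat x - 1 / 2) then (0:ℝ) else |2 * ηhat x - 1|) * pX x) 𝒳 :=
    fun g hg =>
    int_helper h𝒳 hpX_meas hpX_nonneg hpX_int (meas_if hg hηh2 hwηh) (M := 1) (fun x hx => by
      split_ifs
      · simp
      · rw [abs_abs]; exact b2 x hx)
  have iA : ∀ g : (Fin p → ℝ) → ℝ, Measurable g →
      IntegrableOn (fun x =>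
        (if (0 ≤ g x) ↔ (0 ≤ ηhat x - 1 / 2) then (0:ℝ) else |2 * η x - 1|) * pX x) 𝒳 :=
    fun g hg =>
    int_helper h𝒳 hpX_meas hpX_nonneg hpX_int (meas_if hg hηh2 hwη) (M := 1) (fun x hx => by
      split_ifs
      · simp
      · rw [abs_abs]; exact b1 x hx)
  have iT : ∀ g : (Fin p → ℝ) → ℝ, Measurable g →
      IntegrableOn (fun x =>
        (if (0 ≤ g x) ↔ (0 ≤ ηhat x - 1 / 2) then (0:ℝ) else 2 * |ηhat x - η x|) * pX x) 𝒳 :=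
    fun g hg =>
    int_helper h𝒳 hpX_meas hpX_nonneg hpX_int
      (meas_if hg hηh2 ((hηhat.sub hη).abs.const_mul 2)) (M := 2) (fun x hx => by
      split_ifs
      · simp
      · rw [abs_of_nonneg (by positivity)]
        have := b3 x hx; linarith)
  have iI : ∀ g : (Fin p → ℝ) → ℝ, Measurable g →
      IntegrableOn (fun x =>
        (if (0 ≤ g x) ↔ (0 ≤ ηhat x - 1 / 2) then (0:ℝ) else 1) * pX x) 𝒳 := fun g hg =>
    int_helper h𝒳 hpX_meas hpX_nonneg hpX_int (meas_if hg hηh2 measurable_const) (M := 1)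
      (fun x hx => by split_ifs <;> simp)
  have iH2t : ∀ g : (Fin p → ℝ) → ℝ, Measurable g →
      IntegrableOn (fun x =>
        ((if (0 ≤ g x) ↔ (0 ≤ ηhat x - 1 / 2) then (0:ℝ) else |2 * ηhat x - 1|)) ^ 2 * pXt x) 𝒳 :=
    fun g hg =>
    int_helper h𝒳 hpXt_meas hpXt_nonneg hpXt_int ((meas_if hg hηh2 hwηh).pow_const 2) (M := 1)
      (fun x hx => by
        rw [abs_of_nonneg (sq_nonneg _)]
        split_ifs with h
        · norm_num
        · have h2 := b2 x hx
          nlinarith [abs_nonneg (2 * ηhat x - 1)])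
  have iSq : IntegrableOn (fun x => (ηhat x - η x) ^ 2 * pX x) 𝒳 :=
    int_helper h𝒳 hpX_meas hpX_nonneg hpX_int ((hηhat.sub hη).pow_const 2) (M := 1)
      (fun x hx => by
        rw [abs_of_nonneg (sq_nonneg _)]
        have h3 := b3 x hx
        nlinarith [abs_nonneg (ηhat x - η x), sq_abs (ηhat x - η x)])
  have iUV1 : ∀ g : (Fin p → ℝ) → ℝ, Measurable g →
      IntegrableOn (fun x =>
        (|ηhat x - η x| * (if (0 ≤ g x) ↔ (0 ≤ ηhat x - 1 / 2) then (0:ℝ) else 1)) * pX x) 𝒳 :=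
    fun g hg =>
    int_helper h𝒳 hpX_meas hpX_nonneg hpX_int
      ((hηhat.sub hη).abs.mul (meas_if hg hηh2 measurable_const)) (M := 1) (fun x hx => by
        rw [abs_mul, abs_abs]
        split_ifs
        · simp
        · rw [abs_one, mul_one]; exact b3 x hx)
  -- risk-difference identities
  have Rdiff : ∀ g g' : (Fin p → ℝ) → ℝ, Measurable g → Measurable g' →
      R01 g - R01 g' = Φ01 g - Φ01 g' := by
    intro g g' hg hg'
    rw [hR01 g, hR01 g', hΦ01 g, hΦ01 g',
      ← integral_sub (iR g hg) (iR g' hg'), ← integral_sub (iΦ g hg) (iΦ g' hg')]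
    exact integral_congr_ae (Filter.Eventually.of_forall fun x => by
      linear_combination (ptw_risk_excess (g x) (g' x) (η x)) * pX x)
  have Rtdiff : ∀ g g' : (Fin p → ℝ) → ℝ, Measurable g → Measurable g' →
      Rt01 g - Rt01 g' = Φt01 g - Φt01 g' := by
    intro g g' hg hg'
    rw [hRt01 g, hRt01 g', hΦt01 g, hΦt01 g',
      ← integral_sub (iRt g hg) (iRt g' hg'), ← integral_sub (iΦt g hg) (iΦt g' hg')]
    exact integral_congr_ae (Filter.Eventually.of_forall fun x => by
      linear_combination (ptw_risk_excess (g x) (g' x) (ηhat x)) * pXt x)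
  -- Cauchy-Schwarz for the L2 distance term
  have csT : ∀ g : (Fin p → ℝ) → ℝ, Measurable g →
      (∫ x in 𝒳, (if (0 ≤ g x) ↔ (0 ≤ ηhat x - 1 / 2) then (0:ℝ) else 2 * |ηhat x - η x|) * pX x)
        ≤ 2 * Real.sqrt (∫ x in 𝒳, (ηhat x - η x) ^ 2 * pX x) * Cg g := by
    intro g hg
    have iu2 : Integrable (fun x => (|ηhat x - η x| * Real.sqrt (pX x)) ^ 2)
        (volume.restrict 𝒳) := by
      apply iSq.congr
      filter_upwards [ae_restrict_mem h𝒳] with x hx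
      rw [mul_pow, sq_abs, Real.sq_sqrt (hpX_nonneg x hx)]
    have iv2 : Integrable (fun x =>
        ((if (0 ≤ g x) ↔ (0 ≤ ηhat x - 1 / 2) then (0:ℝ) else 1) * Real.sqrt (pX x)) ^ 2)
        (volume.restrict 𝒳) := by
      apply (iI g hg).congr
      filter_upwards [ae_restrict_mem h𝒳] with x hx
      rw [mul_pow, Real.sq_sqrt (hpX_nonneg x hx)]
      congr 1
      split_ifs <;> norm_num
    have iuv : Integrable (fun x => (|ηhat x - η x| * Real.sqrt (pX x)) *
        ((if (0 ≤ g x) ↔ (0 ≤ ηhat x - 1 / 2) then (0:ℝ) else 1) * Real.sqrt (pX x)))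
        (volume.restrict 𝒳) := by
      apply (iUV1 g hg).congr
      filter_upwards [ae_restrict_mem h𝒳] with x hx
      have hs := Real.mul_self_sqrt (hpX_nonneg x hx)
      linear_combination (|ηhat x - η x|
        * (if (0 ≤ g x) ↔ (0 ≤ ηhat x - 1 / 2) then (0:ℝ) else 1)) * hs.symm
    have hcs := my_cs (volume.restrict 𝒳) _ _ iu2 iv2 iuv
    have e1 : (∫ x in 𝒳,
        (if (0 ≤ g x) ↔ (0 ≤ ηhat x - 1 / 2) then (0:ℝ) else 2 * |ηhat x - η x|) * pX x)
        = 2 * ∫ x in 𝒳, (|ηhat x - η x| * Real.sqrt (pX x)) *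
            ((if (0 ≤ g x) ↔ (0 ≤ ηhat x - 1 / 2) then (0:ℝ) else 1) * Real.sqrt (pX x)) := by
      rw [← integral_const_mul]
      apply setIntegral_congr_fun h𝒳
      intro x hx
      beta_reduce
      have hs := Real.mul_self_sqrt (hpX_nonneg x hx)
      split_ifs with h
      · ring
      · linear_combination (2 * |ηhat x - η x|) * hs.symm
    have e2 : (∫ x in 𝒳, (|ηhat x - η x| * Real.sqrt (pX x)) ^ 2)
        = ∫ x in 𝒳, (ηhat x - η x) ^ 2 * pX x :=
      setIntegral_congr_fun h𝒳 (fun x hx => by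
        rw [mul_pow, sq_abs, Real.sq_sqrt (hpX_nonneg x hx)])
    have e3 : (∫ x in 𝒳,
        ((if (0 ≤ g x) ↔ (0 ≤ ηhat x - 1 / 2) then (0:ℝ) else 1) * Real.sqrt (pX x)) ^ 2)
        = ∫ x in 𝒳, (if (0 ≤ g x) ↔ (0 ≤ ηhat x - 1 / 2) then (0:ℝ) else 1) * pX x :=
      setIntegral_congr_fun h𝒳 (fun x hx => by
        rw [mul_pow, Real.sq_sqrt (hpX_nonneg x hx)]
        congr 1
        split_ifs <;> norm_num)
    rw [e2, e3] at hcs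
    rw [hCg g, e1]
    have habs := le_abs_self (∫ x in 𝒳, (|ηhat x - η x| * Real.sqrt (pX x)) *
      ((if (0 ≤ g x) ↔ (0 ≤ ηhat x - 1 / 2) then (0:ℝ) else 1) * Real.sqrt (pX x)))
    nlinarith [hcs, habs]
  -- Cauchy-Schwarz for the chi-square term
  have csChi : ∀ g : (Fin p → ℝ) → ℝ, Measurable g →
      |(∫ x in 𝒳, (if (0 ≤ g x) ↔ (0 ≤ ηhat x - 1 / 2) then (0:ℝ) else |2 * ηhat x - 1|) * pX x)
          - Φt01 g| ≤ Real.sqrt (Φt01 g) * Real.sqrt chi2 := by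
    intro g hg
    have iu2 : Integrable (fun x =>
        ((if (0 ≤ g x) ↔ (0 ≤ ηhat x - 1 / 2) then (0:ℝ) else |2 * ηhat x - 1|)
          * Real.sqrt (pXt x)) ^ 2) (volume.restrict 𝒳) := by
      apply (iH2t g hg).congr
      filter_upwards [ae_restrict_mem h𝒳] with x hx
      rw [mul_pow, Real.sq_sqrt (hpXt_nonneg x hx)]
    have iv2 : Integrable (fun x => ((pX x / pXt x - 1) * Real.sqrt (pXt x)) ^ 2)
        (volume.restrict 𝒳) := by
      apply hchi2_int.congr
      filter_upwards [ae_restrict_mem h𝒳] with x hx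
      rw [mul_pow, Real.sq_sqrt (hpXt_nonneg x hx)]
      ring
    have ptuv : ∀ x ∈ 𝒳,
        ((if (0 ≤ g x) ↔ (0 ≤ ηhat x - 1 / 2) then (0:ℝ) else |2 * ηhat x - 1|) * pX x
          - (if (0 ≤ g x) ↔ (0 ≤ ηhat x - 1 / 2) then (0:ℝ) else |2 * ηhat x - 1|) * pXt x)
        = ((if (0 ≤ g x) ↔ (0 ≤ ηhat x - 1 / 2) then (0:ℝ) else |2 * ηhat x - 1|)
            * Real.sqrt (pXt x)) * ((pX x / pXt x - 1) * Real.sqrt (pXt x)) := by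
      intro x hx
      rcases (hpXt_nonneg x hx).lt_or_eq with hlt | heq
      · have hss := Real.mul_self_sqrt (le_of_lt hlt)
        have h1 : pX x / pXt x * pXt x = pX x := div_mul_cancel₀ _ (ne_of_gt hlt)
        linear_combination
          (-(if (0 ≤ g x) ↔ (0 ≤ ηhat x - 1 / 2) then (0:ℝ) else |2 * ηhat x - 1|)
              * (pX x / pXt x - 1)) * hss
            - (if (0 ≤ g x) ↔ (0 ≤ ηhat x - 1 / 2) then (0:ℝ) else |2 * ηhat x - 1|) * h1
      · have hpx0 : pX x = 0 := by
          by_contra hne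
          have hlt' : 0 < pX x := (hpX_nonneg x hx).lt_of_ne (Ne.symm hne)
          have := hpos x hx hlt'
          linarith
        rw [← heq, hpx0, Real.sqrt_zero]
        ring
    have iuv : Integrable (fun x =>
        ((if (0 ≤ g x) ↔ (0 ≤ ηhat x - 1 / 2) then (0:ℝ) else |2 * ηhat x - 1|)
          * Real.sqrt (pXt x)) * ((pX x / pXt x - 1) * Real.sqrt (pXt x)))
        (volume.restrict 𝒳) := by
      apply (Integrable.sub (iH g hg) (iΦt g hg)).congr
      filter_upwards [ae_restrict_mem h𝒳] with x hx
      exact ptuv x hx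
    have hcs := my_cs (volume.restrict 𝒳) _ _ iu2 iv2 iuv
    have e_uv : (∫ x in 𝒳,
        ((if (0 ≤ g x) ↔ (0 ≤ ηhat x - 1 / 2) then (0:ℝ) else |2 * ηhat x - 1|)
          * Real.sqrt (pXt x)) * ((pX x / pXt x - 1) * Real.sqrt (pXt x)))
        = (∫ x in 𝒳,
            (if (0 ≤ g x) ↔ (0 ≤ ηhat x - 1 / 2) then (0:ℝ) else |2 * ηhat x - 1|) * pX x)
          - Φt01 g := by
      rw [hΦt01 g, ← integral_sub (iH g hg) (iΦt g hg)]
      exact setIntegral_congr_fun h𝒳 (fun x hx => (ptuv x hx).symm)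
    have e_u2 : (∫ x in 𝒳,
        ((if (0 ≤ g x) ↔ (0 ≤ ηhat x - 1 / 2) then (0:ℝ) else |2 * ηhat x - 1|)
          * Real.sqrt (pXt x)) ^ 2) ≤ Φt01 g := by
      rw [hΦt01 g]
      have e : (∫ x in 𝒳,
          ((if (0 ≤ g x) ↔ (0 ≤ ηhat x - 1 / 2) then (0:ℝ) else |2 * ηhat x - 1|)
            * Real.sqrt (pXt x)) ^ 2)
          = ∫ x in 𝒳,
            ((if (0 ≤ g x) ↔ (0 ≤ ηhat x - 1 / 2) then (0:ℝ) else |2 * ηhat x - 1|)) ^ 2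
              * pXt x :=
        setIntegral_congr_fun h𝒳 (fun x hx => by
          beta_reduce
          rw [mul_pow, Real.sq_sqrt (hpXt_nonneg x hx)])
      rw [e]
      apply setIntegral_mono_on (iH2t g hg) (iΦt g hg) h𝒳
      intro x hx
      apply mul_le_mul_of_nonneg_right _ (hpXt_nonneg x hx)
      split_ifs with h
      · norm_num
      · have h2 := b2 x hx
        nlinarith [abs_nonneg (2 * ηhat x - 1)]
    have e_v2 : (∫ x in 𝒳, ((pX x / pXt x - 1) * Real.sqrt (pXt x)) ^ 2) = chi2 := by
      rw [hchi2]
      exact setIntegral_congr_fun h𝒳 (fun x hx => by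
        beta_reduce
        rw [mul_pow, Real.sq_sqrt (hpXt_nonneg x hx)]
        ring)
    rw [e_uv, e_v2] at hcs
    exact hcs.trans
      (mul_le_mul_of_nonneg_right (Real.sqrt_le_sqrt e_u2) (Real.sqrt_nonneg _))
  -- pointwise comparison steps
  have hP : Φ01 (fun x => ηhat x - 1 / 2)
      = ∫ x in 𝒳, (if (0 ≤ ηhat x - 1 / 2) ↔ (0 ≤ η x - 1 / 2) then (0:ℝ) else |2 * η x - 1|)
          * pX x := hΦ01 _
  have iP : IntegrableOn (fun x =>
      (if (0 ≤ ηhat x - 1 / 2) ↔ (0 ≤ η x - 1 / 2) then (0:ℝ) else |2 * η x - 1|) * pX x) 𝒳 :=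
    int_helper h𝒳 hpX_meas hpX_nonneg hpX_int (meas_if hηh2 hη2 hwη) (M := 1) (fun x hx => by
      split_ifs
      · simp
      · rw [abs_abs]; exact b1 x hx)
  have hPnn : 0 ≤ Φ01 (fun x => ηhat x - 1 / 2) := by
    rw [hP]
    apply setIntegral_nonneg h𝒳
    intro x hx
    apply mul_nonneg _ (hpX_nonneg x hx)
    split_ifs
    · exact le_refl _
    · positivity
  have habs1 : ∀ x ∈ 𝒳, |2 * η x - 1| ≤ |2 * ηhat x - 1| + 2 * |ηhat x - η x| := by
    intro x _
    have e1 : |2 * η x - 1| = |(2 * ηhat x - 1) + (2 * η x - 2 * ηhat x)| := by congr 1; ring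
    have e2 : |2 * η x - 2 * ηhat x| = 2 * |ηhat x - η x| := by
      rw [show (2 * η x - 2 * ηhat x : ℝ) = -(2 * (ηhat x - η x)) by ring, abs_neg, abs_mul]
      norm_num
    rw [e1]
    calc |(2 * ηhat x - 1) + (2 * η x - 2 * ηhat x)|
        ≤ |2 * ηhat x - 1| + |2 * η x - 2 * ηhat x| := abs_add_le _ _
      _ = |2 * ηhat x - 1| + 2 * |ηhat x - η x| := by rw [e2]
  have habs2 : ∀ x ∈ 𝒳, |2 * ηhat x - 1| ≤ |2 * η x - 1| + 2 * |ηhat x - η x| := by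
    intro x _
    have e1 : |2 * ηhat x - 1| = |(2 * η x - 1) + (2 * ηhat x - 2 * η x)| := by congr 1; ring
    have e2 : |2 * ηhat x - 2 * η x| = 2 * |ηhat x - η x| := by
      rw [show (2 * ηhat x - 2 * η x : ℝ) = 2 * (ηhat x - η x) by ring, abs_mul]
      norm_num
    rw [e1]
    calc |(2 * η x - 1) + (2 * ηhat x - 2 * η x)|
        ≤ |2 * η x - 1| + |2 * ηhat x - 2 * η x| := abs_add_le _ _
      _ = |2 * η x - 1| + 2 * |ηhat x - η x| := by rw [e2]
  have key1 : ∀ g, Measurable g → Φ01 g ≤ Φt01 g + Real.sqrt (Φt01 g) * Real.sqrt chi2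
      + 2 * Real.sqrt (∫ x in 𝒳, (ηhat x - η x) ^ 2 * pX x) * Cg g
      + Φ01 (fun x => ηhat x - 1 / 2) := by
    intro g hg
    have hcsT := csT g hg
    have hcsC := csChi g hg
    have f2 : Φ01 g ≤ (∫ x in 𝒳,
        (if (0 ≤ g x) ↔ (0 ≤ ηhat x - 1 / 2) then (0:ℝ) else |2 * η x - 1|) * pX x)
        + Φ01 (fun x => ηhat x - 1 / 2) := by
      rw [hΦ01 g, hP, ← integral_add (iA g hg) iP]
      apply setIntegral_mono_on (iΦ g hg) ((iA g hg).add iP) h𝒳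
      intro x hx
      simp only [Pi.add_apply]
      rw [← add_mul]
      apply mul_le_mul_of_nonneg_right _ (hpX_nonneg x hx)
      exact ptw_tri1 (0 ≤ g x) (0 ≤ ηhat x - 1 / 2) (0 ≤ η x - 1 / 2) (abs_nonneg _)
    have f3 : (∫ x in 𝒳,
        (if (0 ≤ g x) ↔ (0 ≤ ηhat x - 1 / 2) then (0:ℝ) else |2 * η x - 1|) * pX x)
        ≤ (∫ x in 𝒳,
            (if (0 ≤ g x) ↔ (0 ≤ ηhat x - 1 / 2) then (0:ℝ) else |2 * ηhat x - 1|) * pX x)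
          + (∫ x in 𝒳,
            (if (0 ≤ g x) ↔ (0 ≤ ηhat x - 1 / 2) then (0:ℝ) else 2 * |ηhat x - η x|) * pX x) := by
      rw [← integral_add (iH g hg) (iT g hg)]
      apply setIntegral_mono_on (iA g hg) ((iH g hg).add (iT g hg)) h𝒳
      intro x hx
      simp only [Pi.add_apply]
      rw [← add_mul]
      apply mul_le_mul_of_nonneg_right _ (hpX_nonneg x hx)
      exact ptw_if_le _ (habs1 x hx) (abs_nonneg _) (by positivity)
    have f4 : (∫ x in 𝒳,
        (if (0 ≤ g x) ↔ (0 ≤ ηhat x - 1 / 2) then (0:ℝ) else |2 * ηhat x - 1|) * pX x)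
        - Φt01 g ≤ Real.sqrt (Φt01 g) * Real.sqrt chi2 := (le_abs_self _).trans hcsC
    linarith
  have key2 : ∀ g, Measurable g → Φt01 g ≤ Φ01 g + Real.sqrt (Φt01 g) * Real.sqrt chi2
      + 2 * Real.sqrt (∫ x in 𝒳, (ηhat x - η x) ^ 2 * pX x) * Cg g
      + Φ01 (fun x => ηhat x - 1 / 2) := by
    intro g hg
    have hcsT := csT g hg
    have hcsC := csChi g hg
    have f8 : (∫ x in 𝒳,
        (if (0 ≤ g x) ↔ (0 ≤ ηhat x - 1 / 2) then (0:ℝ) else |2 * ηhat x - 1|) * pX x)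
        ≤ (∫ x in 𝒳,
            (if (0 ≤ g x) ↔ (0 ≤ ηhat x - 1 / 2) then (0:ℝ) else |2 * η x - 1|) * pX x)
          + (∫ x in 𝒳,
            (if (0 ≤ g x) ↔ (0 ≤ ηhat x - 1 / 2) then (0:ℝ) else 2 * |ηhat x - η x|) * pX x) := by
      rw [← integral_add (iA g hg) (iT g hg)]
      apply setIntegral_mono_on (iH g hg) ((iA g hg).add (iT g hg)) h𝒳
      intro x hx
      simp only [Pi.add_apply]
      rw [← add_mul]
      apply mul_le_mul_of_nonneg_right _ (hpX_nonneg x hx)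
      exact ptw_if_le _ (habs2 x hx) (abs_nonneg _) (by positivity)
    have f9 : (∫ x in 𝒳,
        (if (0 ≤ g x) ↔ (0 ≤ ηhat x - 1 / 2) then (0:ℝ) else |2 * η x - 1|) * pX x)
        ≤ Φ01 g + Φ01 (fun x => ηhat x - 1 / 2) := by
      rw [hΦ01 g, hP, ← integral_add (iΦ g hg) iP]
      apply setIntegral_mono_on (iA g hg) ((iΦ g hg).add iP) h𝒳
      intro x hx
      simp only [Pi.add_apply]
      rw [← add_mul]
      apply mul_le_mul_of_nonneg_right _ (hpX_nonneg x hx)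
      exact ptw_tri2 (0 ≤ g x) (0 ≤ ηhat x - 1 / 2) (0 ≤ η x - 1 / 2) (abs_nonneg _)
    have f7 : Φt01 g - (∫ x in 𝒳,
        (if (0 ≤ g x) ↔ (0 ≤ ηhat x - 1 / 2) then (0:ℝ) else |2 * ηhat x - 1|) * pX x)
        ≤ Real.sqrt (Φt01 g) * Real.sqrt chi2 := by
      refine le_trans ?_ hcsC
      rw [abs_sub_comm]
      exact le_abs_self _
    linarith
  -- assembling
  have h0 : |R01 gtil - R01 ghat| ≤ |R01 ghat - R01 gstar| + (R01 gtil - R01 gstar) := by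
    have t1 : |R01 gtil - R01 ghat|
        ≤ |R01 gtil - R01 gstar| + |R01 gstar - R01 ghat| := abs_sub_le _ _ _
    rw [abs_of_nonneg (by linarith [hgstar_min gtil hgtilG] : (0:ℝ) ≤ R01 gtil - R01 gstar),
      abs_sub_comm (R01 gstar) (R01 ghat)] at t1
    linarith
  have h1 : R01 gtil - R01 gstar = Φ01 gtil - Φ01 gstar := Rdiff _ _ hgtil hgstar
  have h2 := key1 gtil hgtil
  have h3 : Φt01 gtil - Φt01 gtstar = Rt01 gtil - Rt01 gtstar := (Rtdiff _ _ hgtil hgtstar).symm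
  have h4 : Rt01 gtil - Rt01 gtstar ≤ |Rt01 gtil - Rt01 gtstar| := le_abs_self _
  have h5 : Φt01 gtstar - Φt01 gstar ≤ 0 := by
    have := Rtdiff gtstar gstar hgtstar hgstar
    have := hgtstar_min gstar hgstarG
    linarith
  have h6 := key2 gstar hgstar
  have nn1 : 0 ≤ Real.sqrt (Φt01 gtstar) * Real.sqrt chi2 :=
    mul_nonneg (Real.sqrt_nonneg _) (Real.sqrt_nonneg _)
  have nn2 : 0 ≤ Real.sqrt (∫ x in 𝒳, (ηhat x - η x) ^ 2 * pX x) * Cg gtstar := by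
    rw [hCg]
    exact mul_nonneg (Real.sqrt_nonneg _) (Real.sqrt_nonneg _)
  linarith
end

section
/- Regression excess-risk transfer inequality (key step in the proof of Theorem 1). Let f : 𝒳 → ℝ be measurable with sup_{x∈𝒳}|f(x)| ≤ M and sup_{x∈𝒳}|μ̂(x)| ≤ M, and assume Φ_s(f), Φ̃_s(f) and Φ_s(μ̂) are finite. Then |Φ_s(f) − Φ̃_s(f)| ≤ 2·M·√(Φ̃_s(f))·√(χ²(P_X ‖ P_X̃)) + 2·√(Φ_s(f))·√(Φ_s(μ̂)) + Φ_s(μ̂). -/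
open MeasureTheory

lemma my_l2_mul_integrable {α : Type*} [MeasurableSpace α] {ν : Measure α} {g h : α → ℝ}
    (hgm : AEStronglyMeasurable g ν) (hhm : AEStronglyMeasurable h ν)
    (hg2 : Integrable (fun x => g x ^ 2) ν) (hh2 : Integrable (fun x => h x ^ 2) ν) :
    Integrable (fun x => g x * h x) ν := by
  refine Integrable.mono' ((hg2.add hh2).div_const 2) (hgm.mul hhm) (ae_of_all _ fun x => ?_)
  have := sq_nonneg (|g x| - |h x|)
  have h1 : ‖g x * h x‖ = |g x| * |h x| := by rw [Real.norm_eq_abs, abs_mul]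
  have h2 : g x ^ 2 = |g x| ^ 2 := (sq_abs _).symm
  have h3 : h x ^ 2 = |h x| ^ 2 := (sq_abs _).symm
  rw [h1]; simp only [Pi.add_apply]; nlinarith [abs_nonneg (g x), abs_nonneg (h x)]

lemma my_cs_s2 {α : Type*} [MeasurableSpace α] {ν : Measure α} {g h : α → ℝ}
    (hgm : AEStronglyMeasurable g ν) (hhm : AEStronglyMeasurable h ν)
    (hg0 : 0 ≤ᵐ[ν] g) (hh0 : 0 ≤ᵐ[ν] h)
    (hg2 : Integrable (fun x => g x ^ 2) ν) (hh2 : Integrable (fun x => h x ^ 2) ν) :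
    ∫ x, g x * h x ∂ν ≤ Real.sqrt (∫ x, g x ^ 2 ∂ν) * Real.sqrt (∫ x, h x ^ 2 ∂ν) := by
  have hpq : Real.HolderConjugate 2 2 := Real.HolderConjugate.two_two
  have hg : MemLp g 2 ν := (memLp_two_iff_integrable_sq hgm).2 hg2
  have hh : MemLp h 2 ν := (memLp_two_iff_integrable_sq hhm).2 hh2
  have h2 : ENNReal.ofReal (2:ℝ) = 2 := by norm_num
  have := integral_mul_le_Lp_mul_Lq_of_nonneg hpq hg0 hh0 (h2 ▸ hg) (h2 ▸ hh)
  calc ∫ x, g x * h x ∂ν ≤ (∫ a, g a ^ (2:ℝ) ∂ν) ^ (1/(2:ℝ)) * (∫ a, h a ^ (2:ℝ) ∂ν) ^ (1/(2:ℝ)) := this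
    _ = Real.sqrt (∫ x, g x ^ 2 ∂ν) * Real.sqrt (∫ x, h x ^ 2 ∂ν) := by
        simp_rw [Real.rpow_two, ← Real.sqrt_eq_rpow]

/-- **Regression excess-risk transfer inequality** (key step in the proof of Theorem 1).
`Φ_s(f) = ∫ (f − μ)² p_X`, `Φ̃_s(f) = ∫ (f − μ̂)² p_X̃`, `Φ_s(μ̂) = ∫ (μ̂ − μ)² p_X`,
and `χ²(P_X ‖ P_X̃) = ∫ p_X̃ (p_X/p_X̃ − 1)²`. -/
theorem stmt2
    {k : ℕ} (𝒳 : Set (Fin k → ℝ)) (h𝒳 : MeasurableSet 𝒳)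
    (pX pXt : (Fin k → ℝ) → ℝ)
    (hpX_meas : Measurable pX) (hpXt_meas : Measurable pXt)
    (hpX_nonneg : ∀ x ∈ 𝒳, 0 ≤ pX x) (hpXt_nonneg : ∀ x ∈ 𝒳, 0 ≤ pXt x)
    (hpX_int : IntegrableOn pX 𝒳) (hpXt_int : IntegrableOn pXt 𝒳)
    (hpX_one : (∫ x in 𝒳, pX x) = 1) (hpXt_one : (∫ x in 𝒳, pXt x) = 1)
    (hpos : ∀ x ∈ 𝒳, 0 < pX x → 0 < pXt x)
    (μ μhat f : (Fin k → ℝ) → ℝ)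
    (hμ : Measurable μ) (hμhat : Measurable μhat) (hf : Measurable f)
    (M : ℝ) (hfM : ∀ x ∈ 𝒳, |f x| ≤ M) (hμhatM : ∀ x ∈ 𝒳, |μhat x| ≤ M)
    -- finiteness of Φ_s(f), Φ̃_s(f) and Φ_s(μ̂)
    (hi1 : IntegrableOn (fun x => (f x - μ x) ^ 2 * pX x) 𝒳)
    (hi2 : IntegrableOn (fun x => (f x - μhat x) ^ 2 * pXt x) 𝒳)
    (hi3 : IntegrableOn (fun x => (μhat x - μ x) ^ 2 * pX x) 𝒳)
    -- finiteness of the χ²-divergence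
    (hi4 : IntegrableOn (fun x => pXt x * (pX x / pXt x - 1) ^ 2) 𝒳) :
    |(∫ x in 𝒳, (f x - μ x) ^ 2 * pX x) - ∫ x in 𝒳, (f x - μhat x) ^ 2 * pXt x| ≤
      2 * M * Real.sqrt (∫ x in 𝒳, (f x - μhat x) ^ 2 * pXt x)
          * Real.sqrt (∫ x in 𝒳, pXt x * (pX x / pXt x - 1) ^ 2)
        + 2 * Real.sqrt (∫ x in 𝒳, (f x - μ x) ^ 2 * pX x)
            * Real.sqrt (∫ x in 𝒳, (μhat x - μ x) ^ 2 * pX x)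
        + ∫ x in 𝒳, (μhat x - μ x) ^ 2 * pX x := by
  rcases lt_or_ge M 0 with hM | hM
  · have h𝒳e : 𝒳 = ∅ := by
      rcases Set.eq_empty_or_nonempty 𝒳 with h | ⟨x, hx⟩
      · exact h
      · exact absurd ((abs_nonneg (f x)).trans (hfM x hx)) (not_le.2 hM)
    simp [h𝒳e]
  -- notation
  have hmem : ∀ᵐ x ∂(volume.restrict 𝒳), x ∈ 𝒳 := ae_restrict_mem h𝒳
  -- D : ∫ (f - μhat)^2 pX is integrable
  have hD_int : IntegrableOn (fun x => (f x - μhat x) ^ 2 * pX x) 𝒳 := by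
    refine Integrable.mono' (hpX_int.const_mul (4 * M ^ 2))
      (((hf.sub hμhat).pow_const 2).mul hpX_meas).aestronglyMeasurable ?_
    filter_upwards [hmem] with x hx
    have h1 := abs_le.1 (hfM x hx); have h2 := abs_le.1 (hμhatM x hx)
    have h0 := hpX_nonneg x hx
    have hsq : (f x - μhat x) ^ 2 ≤ 4 * M ^ 2 := by
      nlinarith [mul_nonneg (by linarith : (0:ℝ) ≤ 2*M - (f x - μhat x))
        (by linarith : (0:ℝ) ≤ 2*M + (f x - μhat x))]
    rw [Real.norm_eq_abs, abs_mul, abs_of_nonneg (sq_nonneg _), abs_of_nonneg h0]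
    exact mul_le_mul_of_nonneg_right hsq h0
  -- integrability of the cross term
  have hu_int : IntegrableOn (fun x => (μhat x - μ x) * (f x - μ x) * pX x) 𝒳 := by
    refine Integrable.mono' ((hi3.add hi1).div_const 2)
      (((hμhat.sub hμ).mul (hf.sub hμ)).mul hpX_meas).aestronglyMeasurable ?_
    filter_upwards [hmem] with x hx
    have h0 := hpX_nonneg x hx
    simp only [Pi.add_apply]
    rw [Real.norm_eq_abs, abs_mul, abs_mul, abs_of_nonneg h0]
    have hab : |μhat x - μ x| * |f x - μ x| ≤ ((μhat x - μ x)^2 + (f x - μ x)^2)/2 := by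
      nlinarith [sq_nonneg (|μhat x - μ x| - |f x - μ x|), sq_abs (μhat x - μ x),
        sq_abs (f x - μ x)]
    nlinarith [mul_le_mul_of_nonneg_right hab h0]
  -- C ≥ 0
  have hC0 : 0 ≤ ∫ x in 𝒳, (μhat x - μ x) ^ 2 * pX x := by
    refine integral_nonneg_of_ae ?_
    filter_upwards [hmem] with x hx
    exact mul_nonneg (sq_nonneg _) (hpX_nonneg x hx)
  -- key identity : A - D = 2 ∫ u - C
  have hAD : (∫ x in 𝒳, (f x - μ x) ^ 2 * pX x) - (∫ x in 𝒳, (f x - μhat x) ^ 2 * pX x)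
      = 2 * (∫ x in 𝒳, (μhat x - μ x) * (f x - μ x) * pX x)
        - ∫ x in 𝒳, (μhat x - μ x) ^ 2 * pX x := by
    rw [← integral_sub hi1 hD_int, ← integral_const_mul, ← integral_sub (hu_int.const_mul 2) hi3]
    exact integral_congr_ae (ae_of_all _ fun x => by ring)
  -- Cauchy-Schwarz for the cross term
  have hGc2 : Integrable (fun x => (|μhat x - μ x| * Real.sqrt (pX x)) ^ 2) (volume.restrict 𝒳) := by
    refine hi3.congr ?_
    filter_upwards [hmem] with x hx
    rw [mul_pow, sq_abs, Real.sq_sqrt (hpX_nonneg x hx)]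
  have hHc2 : Integrable (fun x => (|f x - μ x| * Real.sqrt (pX x)) ^ 2) (volume.restrict 𝒳) := by
    refine hi1.congr ?_
    filter_upwards [hmem] with x hx
    rw [mul_pow, sq_abs, Real.sq_sqrt (hpX_nonneg x hx)]
  have hGceq : (∫ x in 𝒳, (|μhat x - μ x| * Real.sqrt (pX x)) ^ 2)
      = ∫ x in 𝒳, (μhat x - μ x) ^ 2 * pX x := by
    refine integral_congr_ae ?_
    filter_upwards [hmem] with x hx
    rw [mul_pow, sq_abs, Real.sq_sqrt (hpX_nonneg x hx)]
  have hHceq : (∫ x in 𝒳, (|f x - μ x| * Real.sqrt (pX x)) ^ 2)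
      = ∫ x in 𝒳, (f x - μ x) ^ 2 * pX x := by
    refine integral_congr_ae ?_
    filter_upwards [hmem] with x hx
    rw [mul_pow, sq_abs, Real.sq_sqrt (hpX_nonneg x hx)]
  have hu_bound : |∫ x in 𝒳, (μhat x - μ x) * (f x - μ x) * pX x|
      ≤ Real.sqrt (∫ x in 𝒳, (μhat x - μ x) ^ 2 * pX x)
        * Real.sqrt (∫ x in 𝒳, (f x - μ x) ^ 2 * pX x) := by
    calc |∫ x in 𝒳, (μhat x - μ x) * (f x - μ x) * pX x|
        = ‖∫ x in 𝒳, (μhat x - μ x) * (f x - μ x) * pX x‖ := (Real.norm_eq_abs _).symm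
      _ ≤ ∫ x in 𝒳, ‖(μhat x - μ x) * (f x - μ x) * pX x‖ :=
          norm_integral_le_integral_norm _
      _ = ∫ x in 𝒳, (|μhat x - μ x| * Real.sqrt (pX x)) * (|f x - μ x| * Real.sqrt (pX x)) := by
          refine integral_congr_ae ?_
          filter_upwards [hmem] with x hx
          have h0 := hpX_nonneg x hx
          rw [Real.norm_eq_abs, abs_mul, abs_mul, abs_of_nonneg h0,
            show (|μhat x - μ x| * Real.sqrt (pX x)) * (|f x - μ x| * Real.sqrt (pX x))
              = |μhat x - μ x| * |f x - μ x| * (Real.sqrt (pX x) * Real.sqrt (pX x)) from by ring,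
            Real.mul_self_sqrt h0]
      _ ≤ Real.sqrt (∫ x in 𝒳, (|μhat x - μ x| * Real.sqrt (pX x)) ^ 2)
          * Real.sqrt (∫ x in 𝒳, (|f x - μ x| * Real.sqrt (pX x)) ^ 2) :=
          my_cs_s2 ((hμhat.sub hμ).abs.mul hpX_meas.sqrt).aestronglyMeasurable
            ((hf.sub hμ).abs.mul hpX_meas.sqrt).aestronglyMeasurable
            (ae_of_all _ fun x => by positivity) (ae_of_all _ fun x => by positivity)
            hGc2 hHc2
      _ = _ := by rw [hGceq, hHceq]
  -- the density-shift term
  set G : (Fin k → ℝ) → ℝ := fun x => |f x - μhat x| * Real.sqrt (pXt x) with hGdef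
  set H : (Fin k → ℝ) → ℝ := fun x => Real.sqrt (pXt x) * |pX x / pXt x - 1| with hHdef
  have hGm : AEStronglyMeasurable G (volume.restrict 𝒳) :=
    ((hf.sub hμhat).abs.mul hpXt_meas.sqrt).aestronglyMeasurable
  have hHm : AEStronglyMeasurable H (volume.restrict 𝒳) :=
    (hpXt_meas.sqrt.mul ((hpX_meas.div hpXt_meas).sub measurable_const).abs).aestronglyMeasurable
  have hG2 : Integrable (fun x => G x ^ 2) (volume.restrict 𝒳) := by
    refine hi2.congr ?_
    filter_upwards [hmem] with x hx
    simp only [hGdef]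
    rw [mul_pow, sq_abs, Real.sq_sqrt (hpXt_nonneg x hx)]
  have hH2 : Integrable (fun x => H x ^ 2) (volume.restrict 𝒳) := by
    refine hi4.congr ?_
    filter_upwards [hmem] with x hx
    simp only [hHdef]
    rw [mul_pow, Real.sq_sqrt (hpXt_nonneg x hx), sq_abs]
  have hG2eq : (∫ x in 𝒳, G x ^ 2) = ∫ x in 𝒳, (f x - μhat x) ^ 2 * pXt x := by
    refine integral_congr_ae ?_
    filter_upwards [hmem] with x hx
    simp only [hGdef]
    rw [mul_pow, sq_abs, Real.sq_sqrt (hpXt_nonneg x hx)]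
  have hH2eq : (∫ x in 𝒳, H x ^ 2) = ∫ x in 𝒳, pXt x * (pX x / pXt x - 1) ^ 2 := by
    refine integral_congr_ae ?_
    filter_upwards [hmem] with x hx
    simp only [hHdef]
    rw [mul_pow, Real.sq_sqrt (hpXt_nonneg x hx), sq_abs]
  have hGH_int : Integrable (fun x => G x * H x) (volume.restrict 𝒳) :=
    my_l2_mul_integrable hGm hHm hG2 hH2
  have hv_int : IntegrableOn (fun x => (f x - μhat x) ^ 2 * (pX x - pXt x)) 𝒳 :=
    (hD_int.sub hi2).congr (ae_of_all _ fun x => by simp only [Pi.sub_apply]; ring)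
  have hv : (∫ x in 𝒳, (f x - μhat x) ^ 2 * pX x) - (∫ x in 𝒳, (f x - μhat x) ^ 2 * pXt x)
      = ∫ x in 𝒳, (f x - μhat x) ^ 2 * (pX x - pXt x) := by
    rw [← integral_sub hD_int hi2]
    exact integral_congr_ae (ae_of_all _ fun x => by ring)
  have hptw : ∀ᵐ x ∂(volume.restrict 𝒳),
      ‖(f x - μhat x) ^ 2 * (pX x - pXt x)‖ ≤ 2 * M * (G x * H x) := by
    filter_upwards [hmem] with x hx
    have h0t := hpXt_nonneg x hx
    simp only [hGdef, hHdef]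
    rcases h0t.eq_or_lt with h | h
    · have hpx0 : pX x = 0 := by
        by_contra hne
        have := hpos x hx (lt_of_le_of_ne (hpX_nonneg x hx) (Ne.symm hne))
        linarith [this, h.le]
      simp [← h, hpx0]
    · have key : pXt x * (pX x / pXt x - 1) = pX x - pXt x := by field_simp
      have h2M : |f x - μhat x| ≤ 2 * M := by
        have h1 := abs_le.1 (hfM x hx); have h2 := abs_le.1 (hμhatM x hx)
        rw [abs_le]; constructor <;> linarith
      have h5 : pXt x * |pX x / pXt x - 1| = |pX x - pXt x| := by
        rw [← key, abs_mul, abs_of_pos h]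
      have h6 : (|f x - μhat x| * Real.sqrt (pXt x))
          * (Real.sqrt (pXt x) * |pX x / pXt x - 1|)
          = |f x - μhat x| * |pX x - pXt x| := by
        calc (|f x - μhat x| * Real.sqrt (pXt x)) * (Real.sqrt (pXt x) * |pX x / pXt x - 1|)
            = |f x - μhat x| * ((Real.sqrt (pXt x) * Real.sqrt (pXt x)) * |pX x / pXt x - 1|) := by
              ring
          _ = |f x - μhat x| * (pXt x * |pX x / pXt x - 1|) := by rw [Real.mul_self_sqrt h0t]
          _ = |f x - μhat x| * |pX x - pXt x| := by rw [h5]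
      rw [Real.norm_eq_abs, abs_mul, abs_of_nonneg (sq_nonneg _), h6]
      have h7 : |f x - μhat x| * |f x - μhat x| * |pX x - pXt x|
          ≤ 2 * M * |f x - μhat x| * |pX x - pXt x| :=
        mul_le_mul_of_nonneg_right (mul_le_mul_of_nonneg_right h2M (abs_nonneg _)) (abs_nonneg _)
      calc (f x - μhat x) ^ 2 * |pX x - pXt x|
          = |f x - μhat x| * |f x - μhat x| * |pX x - pXt x| := by rw [← sq_abs]; ring
        _ ≤ 2 * M * |f x - μhat x| * |pX x - pXt x| := h7
        _ = 2 * M * (|f x - μhat x| * |pX x - pXt x|) := by ring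
  have hDB : |(∫ x in 𝒳, (f x - μhat x) ^ 2 * pX x) - ∫ x in 𝒳, (f x - μhat x) ^ 2 * pXt x|
      ≤ 2 * M * Real.sqrt (∫ x in 𝒳, (f x - μhat x) ^ 2 * pXt x)
        * Real.sqrt (∫ x in 𝒳, pXt x * (pX x / pXt x - 1) ^ 2) := by
    rw [hv]
    calc |∫ x in 𝒳, (f x - μhat x) ^ 2 * (pX x - pXt x)|
        = ‖∫ x in 𝒳, (f x - μhat x) ^ 2 * (pX x - pXt x)‖ := (Real.norm_eq_abs _).symm
      _ ≤ ∫ x in 𝒳, ‖(f x - μhat x) ^ 2 * (pX x - pXt x)‖ := norm_integral_le_integral_norm _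
      _ ≤ ∫ x in 𝒳, 2 * M * (G x * H x) :=
          integral_mono_ae hv_int.norm (hGH_int.const_mul (2 * M)) hptw
      _ = 2 * M * ∫ x in 𝒳, G x * H x := integral_const_mul _ _
      _ ≤ 2 * M * (Real.sqrt (∫ x in 𝒳, G x ^ 2) * Real.sqrt (∫ x in 𝒳, H x ^ 2)) := by
          refine mul_le_mul_of_nonneg_left ?_ (by linarith)
          exact my_cs_s2 hGm hHm (ae_of_all _ fun x => by simp only [hGdef]; positivity)
            (ae_of_all _ fun x => by simp only [hHdef]; positivity) hG2 hH2
      _ = _ := by rw [hG2eq, hH2eq]; ring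
  -- assemble
  have habs : |(∫ x in 𝒳, (f x - μ x) ^ 2 * pX x) - ∫ x in 𝒳, (f x - μhat x) ^ 2 * pXt x|
      ≤ |(∫ x in 𝒳, (f x - μ x) ^ 2 * pX x) - ∫ x in 𝒳, (f x - μhat x) ^ 2 * pX x|
        + |(∫ x in 𝒳, (f x - μhat x) ^ 2 * pX x) - ∫ x in 𝒳, (f x - μhat x) ^ 2 * pXt x| := by
    exact abs_sub_le _ _ _
  have hAD_bound : |(∫ x in 𝒳, (f x - μ x) ^ 2 * pX x) - ∫ x in 𝒳, (f x - μhat x) ^ 2 * pX x|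
      ≤ 2 * Real.sqrt (∫ x in 𝒳, (f x - μ x) ^ 2 * pX x)
          * Real.sqrt (∫ x in 𝒳, (μhat x - μ x) ^ 2 * pX x)
        + ∫ x in 𝒳, (μhat x - μ x) ^ 2 * pX x := by
    rw [hAD]
    have h8 : |2 * (∫ x in 𝒳, (μhat x - μ x) * (f x - μ x) * pX x)
        - ∫ x in 𝒳, (μhat x - μ x) ^ 2 * pX x|
        ≤ 2 * |∫ x in 𝒳, (μhat x - μ x) * (f x - μ x) * pX x|
          + ∫ x in 𝒳, (μhat x - μ x) ^ 2 * pX x := by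
      rw [sub_eq_add_neg]
      refine (abs_add_le _ _).trans ?_
      rw [abs_neg, abs_of_nonneg hC0, abs_mul, abs_two]
    have h9 := mul_comm (Real.sqrt (∫ x in 𝒳, (μhat x - μ x) ^ 2 * pX x))
      (Real.sqrt (∫ x in 𝒳, (f x - μ x) ^ 2 * pX x))
    nlinarith [hu_bound, abs_nonneg (∫ x in 𝒳, (μhat x - μ x) * (f x - μ x) * pX x)]
  linarith [habs, hAD_bound, hDB]
end

section
/- (V, d)-fidelity with d > 1 gives a χ²-divergence bound (Lemma S1, part 3, converse direction). Let p and p̃ be probability densities on 𝒳 ⊆ ℝ^p, each strictly positive wherever the other is positive, satisfying the (V, d)-fidelity level with d > 1. Then for every C ≥ 2, max{ χ²(P ‖ P̃), χ²(P̃ ‖ P) } ≤ (C − 1)² + V·2^d·C^{−(d−1)}·(2^{d−1} − 1)^{−1}, where χ²(P ‖ P̃) = ∫ p̃(x)(p(x)/p̃(x) − 1)² dx and χ²(P̃ ‖ P) = ∫ p(x)(p̃(x)/p(x) − 1)² dx. -/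
open MeasureTheory

/-- Dyadic bracketing for reals `≥ 1`. -/
lemma aux10_dyadic {r : ℝ} (hr : 1 ≤ r) : ∃ j : ℕ, (2:ℝ) ^ j ≤ r ∧ r < 2 ^ (j + 1) := by
  have hr0 : 0 < r := lt_of_lt_of_le one_pos hr
  have hlog : 0 ≤ Real.logb 2 r := Real.logb_nonneg one_lt_two hr
  refine ⟨⌊Real.logb 2 r⌋₊, ?_, ?_⟩
  · have h1 : (2:ℝ) ^ ((⌊Real.logb 2 r⌋₊ : ℝ)) ≤ 2 ^ (Real.logb 2 r) :=
      Real.rpow_le_rpow_of_exponent_le one_le_two (Nat.floor_le hlog)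
    rw [Real.rpow_natCast] at h1
    rwa [Real.rpow_logb (by norm_num) (by norm_num) hr0] at h1
  · have h2 : (2:ℝ) ^ (Real.logb 2 r) < 2 ^ (((⌊Real.logb 2 r⌋₊ : ℝ)) + 1) :=
      Real.rpow_lt_rpow_of_exponent_lt one_lt_two (Nat.lt_floor_add_one _)
    rw [Real.rpow_logb (by norm_num) (by norm_num) hr0] at h2
    have : ((⌊Real.logb 2 r⌋₊ : ℝ) + 1) = ((⌊Real.logb 2 r⌋₊ + 1 : ℕ) : ℝ) := by push_cast; ring
    rw [this, Real.rpow_natCast] at h2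
    exact h2

/-- One-sided χ² bound from the one-sided fidelity condition. -/
lemma aux10 {k : ℕ} (𝒳 : Set (Fin k → ℝ)) (h𝒳 : MeasurableSet 𝒳)
    (p q : (Fin k → ℝ) → ℝ)
    (hp_meas : Measurable p) (hq_meas : Measurable q)
    (hp_nonneg : ∀ x ∈ 𝒳, 0 ≤ p x) (hq_nonneg : ∀ x ∈ 𝒳, 0 ≤ q x)
    (hp_int : IntegrableOn p 𝒳) (hq_int : IntegrableOn q 𝒳)
    (hq_one : (∫ x in 𝒳, q x) = 1)
    (V d : ℝ) (hV : 0 ≤ V) (hd : 1 < d)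
    (hfid : ∀ C : ℝ, 0 < C → (∫ x in {x ∈ 𝒳 | C * q x ≤ p x}, p x) ≤ V * C ^ (-d))
    (C : ℝ) (hC : 2 ≤ C) :
    (∫⁻ x in 𝒳, ENNReal.ofReal (q x * (p x / q x - 1) ^ 2))
      ≤ ENNReal.ofReal
          ((C - 1) ^ 2 + V * 2 ^ d * C ^ (-(d - 1)) * ((2 : ℝ) ^ (d - 1) - 1)⁻¹) := by
  have hC0 : (0:ℝ) < C := by linarith
  set f : (Fin k → ℝ) → ENNReal := fun x => ENNReal.ofReal (q x * (p x / q x - 1) ^ 2) with hf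
  set X : ℝ := (2:ℝ) ^ (d - 1) with hX
  have hX1 : 1 < X := by
    rw [hX]
    exact Real.one_lt_rpow_iff_of_pos (by norm_num) |>.2 (Or.inl ⟨one_lt_two, by linarith⟩)
  -- the two pieces
  set A : Set (Fin k → ℝ) := {x ∈ 𝒳 | p x < C * q x} with hA
  set B : Set (Fin k → ℝ) := {x ∈ 𝒳 | C * q x ≤ p x} with hB
  have hAmeas : MeasurableSet A := h𝒳.inter (measurableSet_lt hp_meas (measurable_const.mul hq_meas))
  have hBmeas : MeasurableSet B := h𝒳.inter (measurableSet_le (measurable_const.mul hq_meas) hp_meas)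
  have hAsub : A ⊆ 𝒳 := fun x hx => hx.1
  have hBsub : B ⊆ 𝒳 := fun x hx => hx.1
  have hunion : 𝒳 = A ∪ B := by
    ext x; simp only [hA, hB, Set.mem_union, Set.mem_setOf_eq]
    constructor
    · intro hx; rcases lt_or_ge (p x) (C * q x) with h | h
      · exact Or.inl ⟨hx, h⟩
      · exact Or.inr ⟨hx, h⟩
    · rintro (⟨hx, _⟩ | ⟨hx, _⟩) <;> exact hx
  have hdisj : Disjoint A B := by
    rw [Set.disjoint_left]
    rintro x ⟨_, h1⟩ ⟨_, h2⟩
    exact absurd h2 (not_le.2 h1)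
  have hsplit : (∫⁻ x in 𝒳, f x) = (∫⁻ x in A, f x) + ∫⁻ x in B, f x := by
    rw [hunion, lintegral_union hBmeas hdisj]
  -- Part A
  have hA_le : (∫⁻ x in A, f x) ≤ ENNReal.ofReal ((C - 1) ^ 2) := by
    have hb : ∀ x ∈ A, q x * (p x / q x - 1) ^ 2 ≤ (C - 1) ^ 2 * q x := by
      rintro x ⟨hx𝒳, hxlt⟩
      rcases eq_or_lt_of_le (hq_nonneg x hx𝒳) with h0 | hq
      · simp [← h0]
      · have ht0 : 0 ≤ p x / q x := div_nonneg (hp_nonneg x hx𝒳) hq.le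
        have htC : p x / q x < C := (div_lt_iff₀ hq).2 (by linarith [hxlt])
        have h1 : (p x / q x - 1) ^ 2 ≤ (C - 1) ^ 2 := by nlinarith
        calc q x * (p x / q x - 1) ^ 2 ≤ q x * (C - 1) ^ 2 :=
              mul_le_mul_of_nonneg_left h1 hq.le
          _ = (C - 1) ^ 2 * q x := mul_comm _ _
    calc (∫⁻ x in A, f x) ≤ ∫⁻ x in A, ENNReal.ofReal ((C - 1) ^ 2 * q x) :=
          lintegral_mono_ae ((ae_restrict_mem hAmeas).mono fun x hx =>
            ENNReal.ofReal_le_ofReal (hb x hx))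
      _ = ENNReal.ofReal (∫ x in A, (C - 1) ^ 2 * q x) := by
          rw [ofReal_integral_eq_lintegral_ofReal ((hq_int.mono_set hAsub).const_mul _)
            ((ae_restrict_mem hAmeas).mono fun x hx =>
              mul_nonneg (sq_nonneg _) (hq_nonneg x (hAsub hx)))]
      _ ≤ ENNReal.ofReal ((C - 1) ^ 2) := by
          apply ENNReal.ofReal_le_ofReal
          rw [integral_const_mul]
          have hle : (∫ x in A, q x) ≤ 1 := by
            rw [← hq_one]
            exact setIntegral_mono_set hq_int
              ((ae_restrict_mem h𝒳).mono fun x hx => hq_nonneg x hx)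
              (HasSubset.Subset.eventuallyLE hAsub)
          nlinarith [sq_nonneg (C - 1), setIntegral_nonneg (μ := volume) hAmeas
            (fun x hx => hq_nonneg x (hAsub hx))]
  -- Part B
  set Bj : ℕ → Set (Fin k → ℝ) := fun j =>
    {x ∈ 𝒳 | 0 < q x ∧ 2 ^ j * C * q x ≤ p x ∧ p x < 2 ^ (j + 1) * C * q x} with hBj
  have hBjmeas : ∀ j, MeasurableSet (Bj j) := by
    intro j
    exact h𝒳.inter ((measurableSet_lt measurable_const hq_meas).inter
      ((measurableSet_le (measurable_const.mul hq_meas) hp_meas).inter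
        (measurableSet_lt hp_meas (measurable_const.mul hq_meas))))
  set tail : ℝ := V * 2 ^ d * C ^ (-(d - 1)) * ((2:ℝ) ^ (d - 1) - 1)⁻¹ with htail
  have htail_nonneg : 0 ≤ tail := by
    rw [htail]
    have : (0:ℝ) ≤ ((2:ℝ) ^ (d - 1) - 1)⁻¹ := inv_nonneg.2 (by rw [← hX]; linarith)
    have h2d : (0:ℝ) ≤ (2:ℝ) ^ d := Real.rpow_nonneg (by norm_num) _
    have hCd : (0:ℝ) ≤ C ^ (-(d - 1)) := Real.rpow_nonneg hC0.le _
    positivity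
  have hB_le : (∫⁻ x in B, f x) ≤ ENNReal.ofReal tail := by
    have hcover : B ⊆ (B ∩ {x | q x = 0}) ∪ ⋃ j, Bj j := by
      intro x hx
      rcases eq_or_lt_of_le (hq_nonneg x hx.1) with h0 | hq
      · exact Or.inl ⟨hx, h0.symm⟩
      · right
        have hCq : 0 < C * q x := mul_pos hC0 hq
        have hr : 1 ≤ p x / (C * q x) := (one_le_div hCq).2 hx.2
        obtain ⟨j, hj1, hj2⟩ := aux10_dyadic hr
        refine Set.mem_iUnion.2 ⟨j, hx.1, hq, ?_, ?_⟩
        · rw [mul_assoc]; exact (le_div_iff₀ hCq).1 hj1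
        · rw [mul_assoc]; exact (div_lt_iff₀ hCq).1 hj2
    have hzero : (∫⁻ x in B ∩ {x | q x = 0}, f x) = 0 := by
      have hm : MeasurableSet (B ∩ {x | q x = 0}) :=
        hBmeas.inter (hq_meas (measurableSet_singleton 0))
      rw [setLIntegral_congr_fun hm (fun x hx => ?_), lintegral_zero]
      show f x = (fun _ => (0 : ENNReal)) x
      simp only [hf]
      have : q x = 0 := hx.2
      simp [this]
    have hBj_le : ∀ j : ℕ, (∫⁻ x in Bj j, f x)
        ≤ ENNReal.ofReal (2 ^ (j+1) * C * (V * ((2:ℝ) ^ j * C) ^ (-d))) := by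
      intro j
      have hjC : (0:ℝ) < 2 ^ j * C := by positivity
      have hb : ∀ x ∈ Bj j, q x * (p x / q x - 1) ^ 2 ≤ 2 ^ (j+1) * C * p x := by
        rintro x ⟨hx𝒳, hq, h1, h2⟩
        have hp0 : 0 ≤ p x := hp_nonneg x hx𝒳
        have hpj : (1:ℝ) ≤ 2 ^ j := one_le_pow₀ (by norm_num)
        have h2jC : (2:ℝ) ≤ 2 ^ j * C := by nlinarith
        have h2q : 2 * q x ≤ p x := le_trans (by nlinarith) h1
        have he : q x * (p x / q x - 1) ^ 2 = (p x - q x) ^ 2 / q x := by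
          field_simp
        rw [he, div_le_iff₀ hq]
        nlinarith [mul_le_mul_of_nonneg_left h2.le hp0,
          mul_nonneg hq.le (by linarith : 0 ≤ 2 * p x - q x)]
      calc (∫⁻ x in Bj j, f x) ≤ ∫⁻ x in Bj j, ENNReal.ofReal (2 ^ (j+1) * C * p x) :=
            lintegral_mono_ae ((ae_restrict_mem (hBjmeas j)).mono fun x hx =>
              ENNReal.ofReal_le_ofReal (hb x hx))
        _ = ENNReal.ofReal (∫ x in Bj j, 2 ^ (j+1) * C * p x) := by
            rw [ofReal_integral_eq_lintegral_ofReal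
              ((hp_int.mono_set (fun x hx => hx.1)).const_mul _)
              ((ae_restrict_mem (hBjmeas j)).mono fun x hx =>
                mul_nonneg (by positivity) (hp_nonneg x hx.1))]
        _ ≤ ENNReal.ofReal (2 ^ (j+1) * C * (V * ((2:ℝ) ^ j * C) ^ (-d))) := by
            apply ENNReal.ofReal_le_ofReal
            rw [integral_const_mul]
            apply mul_le_mul_of_nonneg_left _ (by positivity)
            have hSsub : Bj j ⊆ {x ∈ 𝒳 | 2 ^ j * C * q x ≤ p x} := by
              rintro x ⟨hx𝒳, hq, h1, h2⟩; exact ⟨hx𝒳, h1⟩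
            have hSmeas : MeasurableSet {x ∈ 𝒳 | 2 ^ j * C * q x ≤ p x} :=
              h𝒳.inter (measurableSet_le (measurable_const.mul hq_meas) hp_meas)
            have hS𝒳 : {x ∈ 𝒳 | 2 ^ j * C * q x ≤ p x} ⊆ 𝒳 := fun x hx => hx.1
            calc (∫ x in Bj j, p x) ≤ ∫ x in {x ∈ 𝒳 | 2 ^ j * C * q x ≤ p x}, p x :=
                  setIntegral_mono_set (hp_int.mono_set hS𝒳)
                    ((ae_restrict_mem hSmeas).mono fun x hx => hp_nonneg x hx.1)
                    (HasSubset.Subset.eventuallyLE hSsub)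
              _ ≤ V * (2 ^ j * C) ^ (-d) := hfid _ hjC
    have hterm : ∀ j : ℕ, 2 ^ (j+1) * C * (V * ((2:ℝ) ^ j * C) ^ (-d))
        = (2 * C * V * C ^ (-d)) * ((2:ℝ) ^ (1 - d)) ^ j := by
      intro j
      have h1 : ((2:ℝ) ^ j * C) ^ (-d) = ((2:ℝ) ^ j) ^ (-d) * C ^ (-d) :=
        Real.mul_rpow (by positivity) hC0.le
      have h2 : ((2:ℝ) ^ j) ^ (-d) = ((2:ℝ) ^ (-d)) ^ j := by
        rw [← Real.rpow_natCast 2 j, ← Real.rpow_mul (by norm_num), mul_comm,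
          Real.rpow_mul (by norm_num), Real.rpow_natCast]
      have h3 : (2:ℝ) ^ (1 - d) = 2 * (2:ℝ) ^ (-d) := by
        rw [sub_eq_add_neg, Real.rpow_add (by norm_num), Real.rpow_one]
      rw [h1, h2, h3, pow_succ, mul_pow]
      ring
    have hr0 : (0:ℝ) ≤ (2:ℝ) ^ (1 - d) := Real.rpow_nonneg (by norm_num) _
    have hr1 : (2:ℝ) ^ (1 - d) < 1 :=
      Real.rpow_lt_one_of_one_lt_of_neg one_lt_two (by linarith)
    have hCd0 : (0:ℝ) ≤ C ^ (-d) := Real.rpow_nonneg hC0.le _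
    have hc0 : (0:ℝ) ≤ 2 * C * V * C ^ (-d) := by positivity
    have hsum : (∑' j : ℕ, ENNReal.ofReal (2 ^ (j+1) * C * (V * ((2:ℝ) ^ j * C) ^ (-d))))
        = ENNReal.ofReal tail := by
      have hrw : ∀ j : ℕ, ENNReal.ofReal (2 ^ (j+1) * C * (V * ((2:ℝ) ^ j * C) ^ (-d)))
          = ENNReal.ofReal ((2 * C * V * C ^ (-d)) * ((2:ℝ) ^ (1 - d)) ^ j) :=
        fun j => by rw [hterm j]
      simp_rw [hrw]
      rw [← ENNReal.ofReal_tsum_of_nonneg (fun j => by positivity)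
        ((summable_geometric_of_lt_one hr0 hr1).mul_left _)]
      congr 1
      rw [tsum_mul_left, tsum_geometric_of_lt_one hr0 hr1]
      have hrX : (2:ℝ) ^ (1 - d) = X⁻¹ := by
        rw [hX, ← Real.rpow_neg (by norm_num), neg_sub]
      have h2d : (2:ℝ) ^ d = 2 * X := by
        have hadd : (2:ℝ) ^ ((1:ℝ) + (d - 1)) = 2 ^ (1:ℝ) * 2 ^ (d - 1) :=
          Real.rpow_add (by norm_num) _ _
        rw [show (1:ℝ) + (d - 1) = d by ring] at hadd
        rw [hX, hadd, Real.rpow_one]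
      have hCd : C ^ (-(d - 1)) = C * C ^ (-d) := by
        have hadd : C ^ ((1:ℝ) + (-d)) = C ^ (1:ℝ) * C ^ (-d) := Real.rpow_add hC0 _ _
        rw [show (1:ℝ) + (-d) = -(d - 1) by ring] at hadd
        rw [hadd, Real.rpow_one]
      rw [htail, ← hX, h2d, hCd, hrX]
      have hX0 : X ≠ 0 := by linarith
      have hX1' : X - 1 ≠ 0 := by linarith
      have hXne : 1 - X⁻¹ ≠ 0 := by
        have : X⁻¹ < 1 := by
          rw [inv_lt_one_iff₀]; right; exact hX1
        linarith
      field_simp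
    calc (∫⁻ x in B, f x) ≤ ∫⁻ x in (B ∩ {x | q x = 0}) ∪ ⋃ j, Bj j, f x :=
          lintegral_mono_set hcover
      _ ≤ (∫⁻ x in B ∩ {x | q x = 0}, f x) + ∫⁻ x in ⋃ j, Bj j, f x :=
          lintegral_union_le _ _ _
      _ ≤ 0 + ∑' j, ∫⁻ x in Bj j, f x := add_le_add hzero.le (lintegral_iUnion_le _ _)
      _ ≤ ∑' j : ℕ, ENNReal.ofReal (2 ^ (j+1) * C * (V * ((2:ℝ) ^ j * C) ^ (-d))) := by
          rw [zero_add]; exact ENNReal.tsum_le_tsum hBj_le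
      _ = ENNReal.ofReal tail := hsum
  rw [hsplit]
  calc (∫⁻ x in A, f x) + ∫⁻ x in B, f x ≤ ENNReal.ofReal ((C - 1) ^ 2) + ENNReal.ofReal tail :=
        add_le_add hA_le hB_le
    _ = ENNReal.ofReal ((C - 1) ^ 2 + tail) := (ENNReal.ofReal_add (sq_nonneg _) htail_nonneg).symm

/-- **(V, d)-fidelity with d > 1 gives a χ²-divergence bound (Lemma S1, part 3,
converse direction).**  If `p`, `p̃` satisfy the `(V, d)`-fidelity level with `d > 1`,
then for every `C ≥ 2`,
`max{χ²(P ‖ P̃), χ²(P̃ ‖ P)} ≤ (C − 1)² + V·2^d·C^{−(d−1)}·(2^{d−1} − 1)⁻¹`.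
The (possibly infinite) χ²-divergences are expressed as lower Lebesgue integrals. -/
theorem stmt10
    {k : ℕ} (𝒳 : Set (Fin k → ℝ)) (h𝒳 : MeasurableSet 𝒳)
    (p pt : (Fin k → ℝ) → ℝ)
    (hp_meas : Measurable p) (hpt_meas : Measurable pt)
    (hp_nonneg : ∀ x ∈ 𝒳, 0 ≤ p x) (hpt_nonneg : ∀ x ∈ 𝒳, 0 ≤ pt x)
    (hp_int : IntegrableOn p 𝒳) (hpt_int : IntegrableOn pt 𝒳)
    (hp_one : (∫ x in 𝒳, p x) = 1) (hpt_one : (∫ x in 𝒳, pt x) = 1)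
    -- each density is strictly positive wherever the other one is positive
    (hpos : ∀ x ∈ 𝒳, (0 < p x → 0 < pt x) ∧ (0 < pt x → 0 < p x))
    (V d : ℝ) (hV : 0 ≤ V) (hd : 1 < d)
    -- (V, d)-fidelity level
    (hfid : ∀ C : ℝ, 0 < C →
      (∫ x in {x ∈ 𝒳 | C * pt x ≤ p x}, p x) ≤ V * C ^ (-d) ∧
      (∫ x in {x ∈ 𝒳 | C * p x ≤ pt x}, pt x) ≤ V * C ^ (-d)) :
    ∀ C : ℝ, 2 ≤ C →
      max (∫⁻ x in 𝒳, ENNReal.ofReal (pt x * (p x / pt x - 1) ^ 2))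
          (∫⁻ x in 𝒳, ENNReal.ofReal (p x * (pt x / p x - 1) ^ 2))
        ≤ ENNReal.ofReal
            ((C - 1) ^ 2 + V * 2 ^ d * C ^ (-(d - 1)) * ((2 : ℝ) ^ (d - 1) - 1)⁻¹) := by
  intro C hC
  apply max_le
  · exact aux10 𝒳 h𝒳 p pt hp_meas hpt_meas hp_nonneg hpt_nonneg hp_int hpt_int hpt_one
      V d hV hd (fun C' hC' => (hfid C' hC').1) C hC
  · exact aux10 𝒳 h𝒳 pt p hpt_meas hp_meas hpt_nonneg hp_nonneg hpt_int hp_int hp_one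
      V d hV hd (fun C' hC' => (hfid C' hC').2) C hC
end

section
/- Fidelity transfer lemma for bounded integrands (the key inequality behind (Inequ:U1) and (UBG0) in the proof of Theorem 4). Let P and Q be probability measures on 𝒳 ⊆ ℝ^p with densities p and q satisfying the (V, d)-fidelity level (0 < d < ∞), and let h : 𝒳 → [0, B] be measurable with B ≥ 0. Then (i) for every C > 0, ∫ h dP ≤ C·∫ h dQ + B·V·C^{−d}; and consequently (ii) ∫ h dP ≤ (d^{1/(d+1)} + d^{−d/(d+1)})·(B·V)^{1/(d+1)}·(∫ h dQ)^{d/(d+1)}. -/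
open MeasureTheory

/-- **Fidelity transfer lemma for bounded integrands** (the key inequality behind
(Inequ:U1) and (UBG0) in the proof of Theorem 4).  `p` and `q` are probability
densities on `𝒳` satisfying the `(V, d)`-fidelity level, and `h : 𝒳 → [0, B]` is
measurable.  Then (i) `∫ h dP ≤ C ∫ h dQ + B V C^{−d}` for every `C > 0`, and
(ii) `∫ h dP ≤ (d^{1/(d+1)} + d^{−d/(d+1)}) (B V)^{1/(d+1)} (∫ h dQ)^{d/(d+1)}`. -/
theorem stmt11
    {k : ℕ} (𝒳 : Set (Fin k → ℝ)) (h𝒳 : MeasurableSet 𝒳)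
    (p q : (Fin k → ℝ) → ℝ)
    (hp_meas : Measurable p) (hq_meas : Measurable q)
    (hp_nonneg : ∀ x ∈ 𝒳, 0 ≤ p x) (hq_nonneg : ∀ x ∈ 𝒳, 0 ≤ q x)
    (hp_int : IntegrableOn p 𝒳) (hq_int : IntegrableOn q 𝒳)
    (hp_one : (∫ x in 𝒳, p x) = 1) (hq_one : (∫ x in 𝒳, q x) = 1)
    (V d : ℝ) (hV : 0 ≤ V) (hd : 0 < d)
    -- (V, d)-fidelity level
    (hfid : ∀ C : ℝ, 0 < C →
      (∫ x in {x ∈ 𝒳 | C * q x ≤ p x}, p x) ≤ V * C ^ (-d) ∧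
      (∫ x in {x ∈ 𝒳 | C * p x ≤ q x}, q x) ≤ V * C ^ (-d))
    (B : ℝ) (hB : 0 ≤ B)
    (h : (Fin k → ℝ) → ℝ) (hh : Measurable h)
    (hrange : ∀ x ∈ 𝒳, h x ∈ Set.Icc 0 B) :
    (∀ C : ℝ, 0 < C →
        (∫ x in 𝒳, h x * p x) ≤ C * (∫ x in 𝒳, h x * q x) + B * V * C ^ (-d)) ∧
      (∫ x in 𝒳, h x * p x) ≤
        (d ^ (1 / (d + 1)) + d ^ (-(d / (d + 1)))) * (B * V) ^ (1 / (d + 1))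
          * (∫ x in 𝒳, h x * q x) ^ (d / (d + 1)) := by
  have hp' : IntegrableOn (fun x => h x * p x) 𝒳 := by
    refine Integrable.mono' (hp_int.const_mul B) ((hh.mul hp_meas).aestronglyMeasurable) ?_
    filter_upwards [ae_restrict_mem h𝒳] with x hx
    have h1 := hrange x hx
    have h2 := hp_nonneg x hx
    rw [Real.norm_eq_abs, abs_of_nonneg (mul_nonneg h1.1 h2)]
    exact mul_le_mul_of_nonneg_right h1.2 h2
  have hq' : IntegrableOn (fun x => h x * q x) 𝒳 := by
    refine Integrable.mono' (hq_int.const_mul B) ((hh.mul hq_meas).aestronglyMeasurable) ?_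
    filter_upwards [ae_restrict_mem h𝒳] with x hx
    have h1 := hrange x hx
    have h2 := hq_nonneg x hx
    rw [Real.norm_eq_abs, abs_of_nonneg (mul_nonneg h1.1 h2)]
    exact mul_le_mul_of_nonneg_right h1.2 h2
  have hQnn : 0 ≤ ∫ x in 𝒳, h x * q x :=
    setIntegral_nonneg h𝒳 fun x hx => mul_nonneg (hrange x hx).1 (hq_nonneg x hx)
  have key : ∀ C : ℝ, 0 < C →
      (∫ x in 𝒳, h x * p x) ≤ C * (∫ x in 𝒳, h x * q x) + B * V * C ^ (-d) := by
    intro C hC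
    set A : Set (Fin k → ℝ) := {x ∈ 𝒳 | C * q x ≤ p x} with hA_def
    have hA_meas : MeasurableSet A := h𝒳.inter (measurableSet_le (hq_meas.const_mul C) hp_meas)
    have hA_sub : A ⊆ 𝒳 := fun x hx => hx.1
    have hsplit : (∫ x in 𝒳, h x * p x)
        = (∫ x in A, h x * p x) + ∫ x in 𝒳 \ A, h x * p x := by
      rw [← setIntegral_union Set.disjoint_sdiff_right (h𝒳.diff hA_meas)
          (hp'.mono_set hA_sub) (hp'.mono_set Set.diff_subset),
        Set.union_diff_cancel hA_sub]
    have hbound1 : (∫ x in A, h x * p x) ≤ B * V * C ^ (-d) := by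
      have step1 : (∫ x in A, h x * p x) ≤ ∫ x in A, B * p x := by
        refine setIntegral_mono_on (hp'.mono_set hA_sub)
          ((hp_int.mono_set hA_sub).const_mul B) hA_meas fun x hx => ?_
        exact mul_le_mul_of_nonneg_right (hrange x hx.1).2 (hp_nonneg x hx.1)
      have step2 : (∫ x in A, B * p x) = B * ∫ x in A, p x := by
        rw [integral_const_mul]
      have step3 : B * (∫ x in A, p x) ≤ B * (V * C ^ (-d)) :=
        mul_le_mul_of_nonneg_left (hfid C hC).1 hB
      calc (∫ x in A, h x * p x) ≤ B * ∫ x in A, p x := by rw [← step2]; exact step1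
        _ ≤ B * (V * C ^ (-d)) := step3
        _ = B * V * C ^ (-d) := by ring
    have hbound2 : (∫ x in 𝒳 \ A, h x * p x) ≤ C * ∫ x in 𝒳, h x * q x := by
      have step1 : (∫ x in 𝒳 \ A, h x * p x) ≤ ∫ x in 𝒳 \ A, C * (h x * q x) := by
        refine setIntegral_mono_on (hp'.mono_set Set.diff_subset)
          ((hq'.mono_set Set.diff_subset).const_mul C) (h𝒳.diff hA_meas) fun x hx => ?_
        have hx𝒳 : x ∈ 𝒳 := hx.1
        have hnle : ¬ (C * q x ≤ p x) := fun hle => hx.2 ⟨hx𝒳, hle⟩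
        have hlt : p x ≤ C * q x := le_of_not_ge hnle
        calc h x * p x ≤ h x * (C * q x) :=
              mul_le_mul_of_nonneg_left hlt (hrange x hx𝒳).1
          _ = C * (h x * q x) := by ring
      have step2 : (∫ x in 𝒳 \ A, C * (h x * q x)) = C * ∫ x in 𝒳 \ A, h x * q x := by
        rw [integral_const_mul]
      have step3 : (∫ x in 𝒳 \ A, h x * q x) ≤ ∫ x in 𝒳, h x * q x := by
        refine setIntegral_mono_set hq' ?_ (HasSubset.Subset.eventuallyLE Set.diff_subset)
        filter_upwards [ae_restrict_mem h𝒳] with x hx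
        exact mul_nonneg (hrange x hx).1 (hq_nonneg x hx)
      calc (∫ x in 𝒳 \ A, h x * p x) ≤ C * ∫ x in 𝒳 \ A, h x * q x := by
            rw [← step2]; exact step1
        _ ≤ C * ∫ x in 𝒳, h x * q x := mul_le_mul_of_nonneg_left step3 hC.le
    rw [hsplit]
    linarith
  refine ⟨key, ?_⟩
  set I := ∫ x in 𝒳, h x * q x with hI_def
  have hd1 : (0:ℝ) < d + 1 := by linarith
  have ht_pos : 0 < 1 / (d + 1) := by positivity
  have hs_pos : 0 < d / (d + 1) := by positivity
  by_cases hBV : B * V = 0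
  · have hz : (B * V) ^ (1 / (d + 1)) = 0 := by
      rw [hBV]; exact Real.zero_rpow ht_pos.ne'
    rw [hz, mul_zero, zero_mul]
    refine le_of_forall_pos_le_add fun ε hε => ?_
    have hI1 : (0:ℝ) < I + 1 := by linarith
    have hC : (0:ℝ) < ε / (I + 1) := by positivity
    have := key (ε / (I + 1)) hC
    have hzero : B * V * (ε / (I + 1)) ^ (-d) = 0 := by rw [hBV, zero_mul]
    have hle : ε / (I + 1) * I ≤ ε := by
      rw [div_mul_eq_mul_div, div_le_iff₀ hI1]
      nlinarith
    linarith
  · have hBVpos : 0 < B * V := lt_of_le_of_ne (mul_nonneg hB hV) (Ne.symm hBV)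
    by_cases hI : I = 0
    · rw [hI, Real.zero_rpow hs_pos.ne', mul_zero]
      refine le_of_forall_pos_le_add fun ε hε => ?_
      set C := (B * V / ε) ^ (1 / d) with hC_def
      have hXpos : (0:ℝ) < B * V / ε := by positivity
      have hCpos : 0 < C := Real.rpow_pos_of_pos hXpos _
      have hCd : C ^ (-d) = ε / (B * V) := by
        rw [hC_def, ← Real.rpow_mul hXpos.le,
          show 1 / d * (-d) = (-1 : ℝ) by field_simp,
          Real.rpow_neg_one, inv_div]
      have := key C hCpos
      have heq : B * V * (ε / (B * V)) = ε := by field_simp; exact div_self hBVpos.ne'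
      rw [hI, mul_zero, zero_add, hCd, heq] at this
      linarith
    · have hIpos : 0 < I := lt_of_le_of_ne hQnn (Ne.symm hI)
      set C := (d * (B * V) / I) ^ (1 / (d + 1)) with hC_def
      have hXpos : (0:ℝ) < d * (B * V) / I := by positivity
      have hCpos : 0 < C := Real.rpow_pos_of_pos hXpos _
      have hsum : 1 - 1 / (d + 1) = d / (d + 1) := by field_simp; ring
      have hsum2 : 1 - d / (d + 1) = 1 / (d + 1) := by field_simp; ring
      have e0 : C = d ^ (1/(d+1)) * (B*V) ^ (1/(d+1)) / I ^ (1/(d+1)) := by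
        rw [hC_def, Real.div_rpow (by positivity) hIpos.le,
          Real.mul_rpow hd.le hBVpos.le]
      have hIdiv : I / I ^ (1/(d+1)) = I ^ (d/(d+1)) := by
        rw [← hsum, Real.rpow_sub hIpos, Real.rpow_one]
      have e1 : C * I = d ^ (1/(d+1)) * (B*V) ^ (1/(d+1)) * I ^ (d/(d+1)) := by
        rw [e0, ← hIdiv]; ring
      have e2 : B * V * C ^ (-d) = d ^ (-(d/(d+1))) * (B*V) ^ (1/(d+1)) * I ^ (d/(d+1)) := by
        have hexp : C ^ (-d) = (d * (B * V) / I) ^ (-(d/(d+1))) := by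
          rw [hC_def, ← Real.rpow_mul hXpos.le]
          congr 1
          field_simp
        have hXs : (d * (B * V) / I) ^ (d/(d+1))
            = d ^ (d/(d+1)) * (B*V) ^ (d/(d+1)) / I ^ (d/(d+1)) := by
          rw [Real.div_rpow (by positivity) hIpos.le, Real.mul_rpow hd.le hBVpos.le]
        rw [hexp, Real.rpow_neg hXpos.le, hXs]
        rw [Real.rpow_neg hd.le]
        have hBVsplit : B * V * (d ^ (d/(d+1)) * (B*V) ^ (d/(d+1)) / I ^ (d/(d+1)))⁻¹
            = (d ^ (d/(d+1)))⁻¹ * ((B*V) / (B*V) ^ (d/(d+1))) * I ^ (d/(d+1)) := by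
          field_simp
          try ring
        rw [hBVsplit]
        have : (B*V) / (B*V) ^ (d/(d+1)) = (B*V) ^ (1/(d+1)) := by
          rw [← hsum2, Real.rpow_sub hBVpos, Real.rpow_one]
        rw [this]
      calc (∫ x in 𝒳, h x * p x) ≤ C * I + B * V * C ^ (-d) := key C hCpos
        _ = (d ^ (1 / (d + 1)) + d ^ (-(d / (d + 1)))) * (B * V) ^ (1 / (d + 1))
            * I ^ (d / (d + 1)) := by rw [e1, e2]; ring
end

section
/- Excess-risk bound for the synthetic regression minimizer (inequality (Ineq:final) in the proof of Theorem 4). Assume p_X and p_X̃ satisfy the (V, d)-fidelity level with 0 < d < ∞. Let μ, μ̂ : 𝒳 → ℝ be measurable with ‖μ − μ̂‖_{L²(P_X)} < ∞, and let F₂ be a set of measurable functions such that |f(x) − μ̂(x)| ≤ U for all f ∈ F₂ and all x ∈ 𝒳, for a constant U ≥ 0. Let f* ∈ F₂ minimize Φ_s(f) = ∫ (f − μ)² p_X over F₂ and let f̃* ∈ F₂ minimize Φ̃_s(f) = ∫ (f − μ̂)² p_X̃ over F₂. Then √(Φ_s(f̃*)) ≤ ‖μ − μ̂‖_{L²(P_X)}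 + C_{d,V,U}·( ‖μ̂ − μ‖_{L²(P_X)} + √(Φ_s(f*)) )^{d²/(d+1)²}, where C_{d,V,U} = (d^{1/(d+1)} + d^{−d/(d+1)})^{(3d+1)/(2(d+1))}·V^{(2d+1)/(2(d+1)²)}·U^{(2d+1)/(d+1)²}. -/
open MeasureTheory


open Filter Topology in
lemma min_split {I Iu Iv : ℝ} (hIu : 0 ≤ Iu) (hIv : 0 ≤ Iv)
    (h : ∀ l : ℝ, 0 < l → l < 1 → I ≤ Iu / l + Iv / (1 - l)) :
    I ≤ (Real.sqrt Iu + Real.sqrt Iv) ^ 2 := by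
  set a := Real.sqrt Iu with ha
  set b := Real.sqrt Iv with hb
  have ha0 : 0 ≤ a := Real.sqrt_nonneg _
  have hb0 : 0 ≤ b := Real.sqrt_nonneg _
  have ha2 : a ^ 2 = Iu := Real.sq_sqrt hIu
  have hb2 : b ^ 2 = Iv := Real.sq_sqrt hIv
  have key : ∀ δ : ℝ, 0 < δ → I ≤ (a + b + 2 * δ) ^ 2 := by
    intro δ hδ
    have hS : 0 < a + b + 2 * δ := by linarith
    have haδ : 0 < a + δ := by linarith
    have hbδ : 0 < b + δ := by linarith
    have hl1 : (0:ℝ) < (a + δ) / (a + b + 2 * δ) := div_pos haδ hS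
    have hl2 : (a + δ) / (a + b + 2 * δ) < 1 := by
      rw [div_lt_one hS]; linarith
    have h1 := h _ hl1 hl2
    have e1 : Iu / ((a + δ) / (a + b + 2 * δ)) = Iu * (a + b + 2 * δ) / (a + δ) := by
      field_simp
    have e2 : 1 - (a + δ) / (a + b + 2 * δ) = (b + δ) / (a + b + 2 * δ) := by
      field_simp; ring
    have e3 : Iv / ((b + δ) / (a + b + 2 * δ)) = Iv * (a + b + 2 * δ) / (b + δ) := by
      field_simp
    rw [e1, e2, e3] at h1
    have b1 : Iu * (a + b + 2 * δ) / (a + δ) ≤ (a + δ) * (a + b + 2 * δ) := by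
      rw [div_le_iff₀ haδ, ← ha2]
      nlinarith [mul_nonneg (mul_nonneg hδ.le (by linarith : (0:ℝ) ≤ 2*a+δ)) hS.le]
    have b2 : Iv * (a + b + 2 * δ) / (b + δ) ≤ (b + δ) * (a + b + 2 * δ) := by
      rw [div_le_iff₀ hbδ, ← hb2]
      nlinarith [mul_nonneg (mul_nonneg hδ.le (by linarith : (0:ℝ) ≤ 2*b+δ)) hS.le]
    nlinarith
  have htend : Tendsto (fun δ : ℝ => (a + b + 2 * δ) ^ 2) (𝓝[>] 0) (𝓝 ((a + b) ^ 2)) := by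
    have hc : Continuous (fun δ : ℝ => (a + b + 2 * δ) ^ 2) := by continuity
    have := hc.tendsto 0
    simpa using this.mono_left nhdsWithin_le_nhds
  exact ge_of_tendsto htend (eventually_nhdsWithin_of_forall fun δ hδ => key δ hδ)

lemma opt_lemma (d : ℝ) (hd : 0 < d) {X s M : ℝ} (hs : 0 ≤ s) (hM : 0 ≤ M)
    (h : ∀ C : ℝ, 0 < C → X ≤ C * s + M * C ^ (-d)) :
    X ≤ (d ^ (1 / (d + 1)) + d ^ (-(d / (d + 1)))) * s ^ (d / (d + 1)) * M ^ (1 / (d + 1)) := by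
  have hd1 : (0:ℝ) < d + 1 := by linarith
  have hκ : 0 ≤ d ^ (1 / (d + 1)) + d ^ (-(d / (d + 1))) :=
    add_nonneg (Real.rpow_nonneg hd.le _) (Real.rpow_nonneg hd.le _)
  rcases eq_or_lt_of_le hM with hM0 | hMpos
  · -- M = 0
    have hX0 : X ≤ 0 := by
      refine le_of_forall_pos_le_add fun ε hε => ?_
      have hC : (0:ℝ) < ε / (s + 1) := div_pos hε (by linarith)
      have := h _ hC
      have hle : ε / (s + 1) * s ≤ ε := by
        rw [div_mul_eq_mul_div, div_le_iff₀ (by linarith)]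
        nlinarith
      calc X ≤ ε / (s + 1) * s + M * (ε / (s + 1)) ^ (-d) := this
        _ = ε / (s + 1) * s := by rw [← hM0]; ring
        _ ≤ 0 + ε := by linarith
    calc X ≤ 0 := hX0
      _ ≤ _ := by positivity
  rcases eq_or_lt_of_le hs with hs0 | hspos
  · -- s = 0
    have hX0 : X ≤ 0 := by
      refine le_of_forall_pos_le_add fun ε hε => ?_
      have hb : (0:ℝ) < M / ε := div_pos hMpos hε
      have hC : (0:ℝ) < (M / ε) ^ (1 / d) := Real.rpow_pos_of_pos hb _
      have h1 := h _ hC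
      have hpow : ((M / ε) ^ (1 / d)) ^ (-d) = ε / M := by
        rw [← Real.rpow_mul hb.le]
        have : 1 / d * (-d) = -1 := by field_simp
        rw [this, Real.rpow_neg_one, inv_div]
      rw [hpow, ← hs0, mul_zero, zero_add, mul_div_cancel₀ _ (ne_of_gt hMpos)] at h1
      linarith
    calc X ≤ 0 := hX0
      _ ≤ _ := by positivity
  · -- s > 0, M > 0
    set C := (d * M / s) ^ (1 / (d + 1)) with hC
    have hbase : 0 < d * M / s := div_pos (mul_pos hd hMpos) hspos
    have hCpos : 0 < C := Real.rpow_pos_of_pos hbase _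
    have h1 := h C hCpos
    have key : ∀ e : ℝ, C ^ e =
        d ^ (1 / (d + 1) * e) * M ^ (1 / (d + 1) * e) * s ^ (-(1 / (d + 1) * e)) := by
      intro e
      rw [hC, ← Real.rpow_mul hbase.le, div_eq_mul_inv,
        Real.mul_rpow (mul_pos hd hMpos).le (inv_nonneg.2 hspos.le),
        Real.mul_rpow hd.le hMpos.le, Real.inv_rpow hspos.le, ← Real.rpow_neg hspos.le]
    have eC1 : C * s = d ^ (1 / (d + 1)) * M ^ (1 / (d + 1)) * s ^ (d / (d + 1)) := by
      calc C * s = C ^ (1:ℝ) * s ^ (1:ℝ) := by rw [Real.rpow_one, Real.rpow_one]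
        _ = d ^ (1 / (d + 1)) * M ^ (1 / (d + 1)) * (s ^ (-(1 / (d + 1) * 1)) * s ^ (1:ℝ)) := by
            rw [key]; ring_nf
        _ = d ^ (1 / (d + 1)) * M ^ (1 / (d + 1)) * s ^ (d / (d + 1)) := by
            rw [← Real.rpow_add hspos]
            congr 1
            field_simp
            congr 1; ring
    have eC2 : M * C ^ (-d) = d ^ (-(d / (d + 1))) * M ^ (1 / (d + 1)) * s ^ (d / (d + 1)) := by
      have he : 1 / (d + 1) * (-d) = -(d / (d + 1)) := by field_simp
      calc M * C ^ (-d) = M ^ (1:ℝ) * C ^ (-d) := by rw [Real.rpow_one]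
        _ = M ^ (1:ℝ) * (d ^ (-(d / (d+1))) * M ^ (-(d / (d+1))) * s ^ (d / (d + 1))) := by
            rw [key, he]; norm_num
        _ = d ^ (-(d / (d + 1))) * (M ^ (1:ℝ) * M ^ (-(d / (d+1)))) * s ^ (d / (d + 1)) := by
            ring
        _ = _ := by
            rw [← Real.rpow_add hMpos]
            congr 2
            field_simp
            congr 1; ring
    rw [eC1, eC2] at h1
    calc X ≤ _ := h1
      _ = _ := by ring


variable {α : Type*} [MeasureSpace α]

lemma int_mono {s : Set α} (hs : MeasurableSet s) {f g : α → ℝ}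
    (hf : Measurable f) (hg : IntegrableOn g s) (h : ∀ x ∈ s, |f x| ≤ g x) :
    IntegrableOn f s := by
  refine Integrable.mono hg hf.aestronglyMeasurable ?_
  refine (ae_restrict_iff' hs).2 (ae_of_all _ fun x hx => ?_)
  rw [Real.norm_eq_abs, Real.norm_eq_abs]
  exact (h x hx).trans (le_abs_self _)

lemma minkowski_sq {s : Set α} (hs : MeasurableSet s) {u v w : α → ℝ}
    (hw0 : ∀ x ∈ s, 0 ≤ w x)
    (huv : IntegrableOn (fun x => (u x + v x) ^ 2 * w x) s)
    (hu2 : IntegrableOn (fun x => u x ^ 2 * w x) s)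
    (hv2 : IntegrableOn (fun x => v x ^ 2 * w x) s) :
    Real.sqrt (∫ x in s, (u x + v x) ^ 2 * w x) ≤
      Real.sqrt (∫ x in s, u x ^ 2 * w x) + Real.sqrt (∫ x in s, v x ^ 2 * w x) := by
  have hIu : 0 ≤ ∫ x in s, u x ^ 2 * w x :=
    setIntegral_nonneg hs fun x hx => mul_nonneg (sq_nonneg _) (hw0 x hx)
  have hIv : 0 ≤ ∫ x in s, v x ^ 2 * w x :=
    setIntegral_nonneg hs fun x hx => mul_nonneg (sq_nonneg _) (hw0 x hx)
  have key : ∀ l : ℝ, 0 < l → l < 1 →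
      (∫ x in s, (u x + v x) ^ 2 * w x) ≤
        (∫ x in s, u x ^ 2 * w x) / l + (∫ x in s, v x ^ 2 * w x) / (1 - l) := by
    intro l hl hl1
    have hl1' : 0 < 1 - l := by linarith
    have mono : (∫ x in s, (u x + v x) ^ 2 * w x) ≤
        ∫ x in s, ((1/l) * (u x ^ 2 * w x) + (1/(1-l)) * (v x ^ 2 * w x)) := by
      refine setIntegral_mono_on huv ((hu2.const_mul _).add (hv2.const_mul _)) hs
        fun x hx => ?_
      have hwx := hw0 x hx
      have pt : (u x + v x) ^ 2 ≤ (1/l) * u x ^ 2 + (1/(1-l)) * v x ^ 2 := by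
        have hll : 0 < l * (1 - l) := mul_pos hl hl1'
        have key0 : (1/l) * u x ^ 2 + (1/(1-l)) * v x ^ 2 - (u x + v x) ^ 2 =
            ((1 - l) * u x - l * v x) ^ 2 / (l * (1 - l)) := by
          field_simp
          ring
        rw [← sub_nonneg, key0]
        positivity
      nlinarith [mul_le_mul_of_nonneg_right pt hwx]
    rw [integral_add (hu2.const_mul _) (hv2.const_mul _), integral_const_mul,
      integral_const_mul] at mono
    calc (∫ x in s, (u x + v x) ^ 2 * w x) ≤ _ := mono
      _ = _ := by rw [one_div, one_div, inv_mul_eq_div, inv_mul_eq_div]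
  have := min_split hIu hIv key
  calc Real.sqrt (∫ x in s, (u x + v x) ^ 2 * w x)
      ≤ Real.sqrt ((Real.sqrt (∫ x in s, u x ^ 2 * w x) +
          Real.sqrt (∫ x in s, v x ^ 2 * w x)) ^ 2) := Real.sqrt_le_sqrt this
    _ = _ := Real.sqrt_sq (by positivity)

lemma change_of_measure {s : Set α} (hs : MeasurableSet s) {g w1 w2 : α → ℝ}
    (hg : Measurable g) (hw1 : Measurable w1) (hw2 : Measurable w2)
    (hg0 : ∀ x ∈ s, 0 ≤ g x) (hw2_0 : ∀ x ∈ s, 0 ≤ w2 x)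
    {U2 : ℝ} (hU2 : 0 ≤ U2) (hgU : ∀ x ∈ s, g x ≤ U2)
    (hw1int : IntegrableOn w1 s)
    (hgw1int : IntegrableOn (fun x => g x * w1 x) s)
    (hgw2int : IntegrableOn (fun x => g x * w2 x) s)
    {C R : ℝ} (hC : 0 < C)
    (hfid : (∫ x in {x ∈ s | C * w2 x ≤ w1 x}, w1 x) ≤ R) :
    (∫ x in s, g x * w1 x) ≤ C * (∫ x in s, g x * w2 x) + U2 * R := by
  set T : Set α := {x | C * w2 x ≤ w1 x} with hT
  have hTm : MeasurableSet T := measurableSet_le (hw2.const_mul C) hw1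
  have hsplit : (∫ x in s ∩ T, g x * w1 x) + (∫ x in s \ T, g x * w1 x)
      = ∫ x in s, g x * w1 x := integral_inter_add_diff hTm hgw1int
  have hseteq : {x ∈ s | C * w2 x ≤ w1 x} = s ∩ T := rfl
  rw [hseteq] at hfid
  have h1 : (∫ x in s ∩ T, g x * w1 x) ≤ U2 * R := by
    have b1 : (∫ x in s ∩ T, g x * w1 x) ≤ ∫ x in s ∩ T, U2 * w1 x := by
      refine setIntegral_mono_on (hgw1int.mono_set Set.inter_subset_left)
        ((hw1int.mono_set Set.inter_subset_left).const_mul _) (hs.inter hTm)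
        fun x hx => ?_
      have hxw : 0 ≤ w1 x :=
        le_trans (mul_nonneg hC.le (hw2_0 x hx.1)) hx.2
      exact mul_le_mul_of_nonneg_right (hgU x hx.1) hxw
    have b2 : (∫ x in s ∩ T, w1 x) ≤ R := hfid
    calc (∫ x in s ∩ T, g x * w1 x) ≤ ∫ x in s ∩ T, U2 * w1 x := b1
      _ = U2 * ∫ x in s ∩ T, w1 x := integral_const_mul _ _
      _ ≤ U2 * R := mul_le_mul_of_nonneg_left b2 hU2
  have h2 : (∫ x in s \ T, g x * w1 x) ≤ C * ∫ x in s, g x * w2 x := by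
    have b1 : (∫ x in s \ T, g x * w1 x) ≤ ∫ x in s \ T, C * (g x * w2 x) := by
      refine setIntegral_mono_on (hgw1int.mono_set Set.diff_subset)
        ((hgw2int.mono_set Set.diff_subset).const_mul _) (hs.diff hTm)
        fun x hx => ?_
      have hlt : w1 x < C * w2 x := lt_of_not_ge hx.2
      calc g x * w1 x ≤ g x * (C * w2 x) :=
            mul_le_mul_of_nonneg_left hlt.le (hg0 x hx.1)
        _ = C * (g x * w2 x) := by ring
    have b2 : (∫ x in s \ T, g x * w2 x) ≤ ∫ x in s, g x * w2 x := by
      refine setIntegral_mono_set hgw2int ?_ (HasSubset.Subset.eventuallyLE Set.diff_subset)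
      exact (ae_restrict_iff' hs).2 (ae_of_all _ fun x hx =>
        mul_nonneg (hg0 x hx) (hw2_0 x hx))
    calc (∫ x in s \ T, g x * w1 x) ≤ ∫ x in s \ T, C * (g x * w2 x) := b1
      _ = C * ∫ x in s \ T, g x * w2 x := integral_const_mul _ _
      _ ≤ C * ∫ x in s, g x * w2 x := mul_le_mul_of_nonneg_left b2 hC.le
  linarith

set_option maxHeartbeats 1000000 in
/-- **Excess-risk bound for the synthetic regression minimizer** (inequality
(Ineq:final) in the proof of Theorem 4).  `p_X`, `p_X̃` satisfy the `(V, d)`-fidelity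
level, `F₂` is a class of measurable functions with `|f − μ̂| ≤ U` on `𝒳`, `fstar`
minimizes `Φ_s(f) = ∫ (f − μ)² p_X` over `F₂` and `ftstar` minimizes
`Φ̃_s(f) = ∫ (f − μ̂)² p_X̃` over `F₂`.  Then
`√(Φ_s(f̃*)) ≤ ‖μ − μ̂‖ + C_{d,V,U} (‖μ̂ − μ‖ + √(Φ_s(f*)))^{d²/(d+1)²}`. -/
theorem stmt12
    {k : ℕ} (𝒳 : Set (Fin k → ℝ)) (h𝒳 : MeasurableSet 𝒳)
    (pX pXt : (Fin k → ℝ) → ℝ)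
    (hpX_meas : Measurable pX) (hpXt_meas : Measurable pXt)
    (hpX_nonneg : ∀ x ∈ 𝒳, 0 ≤ pX x) (hpXt_nonneg : ∀ x ∈ 𝒳, 0 ≤ pXt x)
    (hpX_int : IntegrableOn pX 𝒳) (hpXt_int : IntegrableOn pXt 𝒳)
    (hpX_one : (∫ x in 𝒳, pX x) = 1) (hpXt_one : (∫ x in 𝒳, pXt x) = 1)
    (V d : ℝ) (hV : 0 ≤ V) (hd : 0 < d)
    -- (V, d)-fidelity level
    (hfid : ∀ C : ℝ, 0 < C →
      (∫ x in {x ∈ 𝒳 | C * pXt x ≤ pX x}, pX x) ≤ V * C ^ (-d) ∧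
      (∫ x in {x ∈ 𝒳 | C * pX x ≤ pXt x}, pXt x) ≤ V * C ^ (-d))
    (μ μhat : (Fin k → ℝ) → ℝ)
    (hμ : Measurable μ) (hμhat : Measurable μhat)
    -- ‖μ − μ̂‖_{L²(P_X)} < ∞
    (hμμhat : IntegrableOn (fun x => (μ x - μhat x) ^ 2 * pX x) 𝒳)
    (F2 : Set ((Fin k → ℝ) → ℝ)) (hF2 : ∀ f ∈ F2, Measurable f)
    (U : ℝ) (hU : 0 ≤ U)
    (hbdd : ∀ f ∈ F2, ∀ x ∈ 𝒳, |f x - μhat x| ≤ U)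
    (fstar ftstar : (Fin k → ℝ) → ℝ)
    (hfstar : fstar ∈ F2) (hftstar : ftstar ∈ F2)
    (hfstar_min : ∀ f ∈ F2,
      (∫ x in 𝒳, (fstar x - μ x) ^ 2 * pX x) ≤ ∫ x in 𝒳, (f x - μ x) ^ 2 * pX x)
    (hftstar_min : ∀ f ∈ F2,
      (∫ x in 𝒳, (ftstar x - μhat x) ^ 2 * pXt x) ≤ ∫ x in 𝒳, (f x - μhat x) ^ 2 * pXt x) :
    Real.sqrt (∫ x in 𝒳, (ftstar x - μ x) ^ 2 * pX x) ≤
      Real.sqrt (∫ x in 𝒳, (μ x - μhat x) ^ 2 * pX x)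
        + ((d ^ (1 / (d + 1)) + d ^ (-(d / (d + 1)))) ^ ((3 * d + 1) / (2 * (d + 1)))
            * V ^ ((2 * d + 1) / (2 * (d + 1) ^ 2)) * U ^ ((2 * d + 1) / (d + 1) ^ 2))
          * (Real.sqrt (∫ x in 𝒳, (μ x - μhat x) ^ 2 * pX x)
              + Real.sqrt (∫ x in 𝒳, (fstar x - μ x) ^ 2 * pX x))
            ^ (d ^ 2 / (d + 1) ^ 2) := by
  have hd1 : (0:ℝ) < d + 1 := by linarith
  set κ : ℝ := d ^ (1 / (d + 1)) + d ^ (-(d / (d + 1))) with hκdef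
  have hκpos : 0 < κ :=
    add_pos (Real.rpow_pos_of_pos hd _) (Real.rpow_pos_of_pos hd _)
  set M : ℝ := U ^ 2 * V with hMdef
  have hM0 : 0 ≤ M := mul_nonneg (sq_nonneg _) hV
  -- measurability
  have hmfs : Measurable fstar := hF2 fstar hfstar
  have hmft : Measurable ftstar := hF2 ftstar hftstar
  -- pointwise bounds
  have hsqbdd : ∀ f ∈ F2, ∀ x ∈ 𝒳, (f x - μhat x) ^ 2 ≤ U ^ 2 := by
    intro f hf x hx
    have h := abs_le.1 (hbdd f hf x hx)
    exact sq_le_sq' h.1 h.2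
  -- integrability of (f - μhat)^2 * w
  have intg : ∀ f ∈ F2, ∀ w : (Fin k → ℝ) → ℝ, Measurable w →
      (∀ x ∈ 𝒳, 0 ≤ w x) → IntegrableOn w 𝒳 →
      IntegrableOn (fun x => (f x - μhat x) ^ 2 * w x) 𝒳 := by
    intro f hf w hw hw0 hwint
    refine int_mono h𝒳 (((hF2 f hf).sub hμhat).pow_const 2 |>.mul hw)
      (hwint.const_mul (U ^ 2)) fun x hx => ?_
    have h1 := hsqbdd f hf x hx
    have h2 := hw0 x hx
    rw [abs_of_nonneg (mul_nonneg (sq_nonneg _) h2)]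
    exact mul_le_mul_of_nonneg_right h1 h2
  -- integrability of (f - μ)^2 * pX
  have intf2 : ∀ f ∈ F2, IntegrableOn (fun x => (f x - μ x) ^ 2 * pX x) 𝒳 := by
    intro f hf
    refine int_mono h𝒳 (((hF2 f hf).sub hμ).pow_const 2 |>.mul hpX_meas)
      ((hpX_int.const_mul (2 * U ^ 2)).add (hμμhat.const_mul 2)) fun x hx => ?_
    have h1 := hsqbdd f hf x hx
    have h2 := hpX_nonneg x hx
    have h3 : (f x - μ x) ^ 2 ≤ 2 * U ^ 2 + 2 * (μ x - μhat x) ^ 2 := by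
      nlinarith [sq_nonneg (f x - μhat x + (μ x - μhat x)), sq_nonneg (f x - μhat x - (μ x - μhat x))]
    rw [abs_of_nonneg (mul_nonneg (sq_nonneg _) h2)]
    calc (f x - μ x) ^ 2 * pX x ≤ (2 * U ^ 2 + 2 * (μ x - μhat x) ^ 2) * pX x :=
          mul_le_mul_of_nonneg_right h3 h2
      _ = 2 * U ^ 2 * pX x + 2 * ((μ x - μhat x) ^ 2 * pX x) := by ring
  set A : ℝ := ∫ x in 𝒳, (μ x - μhat x) ^ 2 * pX x with hAdef
  set B : ℝ := ∫ x in 𝒳, (fstar x - μ x) ^ 2 * pX x with hBdef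
  set E : ℝ := ∫ x in 𝒳, (ftstar x - μhat x) ^ 2 * pX x with hEdef
  have hA0 : 0 ≤ A := setIntegral_nonneg h𝒳 fun x hx =>
    mul_nonneg (sq_nonneg _) (hpX_nonneg x hx)
  have hB0 : 0 ≤ B := setIntegral_nonneg h𝒳 fun x hx =>
    mul_nonneg (sq_nonneg _) (hpX_nonneg x hx)
  have hE0 : 0 ≤ E := setIntegral_nonneg h𝒳 fun x hx =>
    mul_nonneg (sq_nonneg _) (hpX_nonneg x hx)
  set T : ℝ := Real.sqrt A + Real.sqrt B with hTdef
  have hT0 : 0 ≤ T := add_nonneg (Real.sqrt_nonneg _) (Real.sqrt_nonneg _)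
  -- Step 1 : sqrt ∫ (ftstar - μ)² pX ≤ sqrt E + sqrt A
  have step1 : Real.sqrt (∫ x in 𝒳, (ftstar x - μ x) ^ 2 * pX x) ≤
      Real.sqrt E + Real.sqrt A := by
    have e1 : (fun x => ((ftstar x - μhat x) + (μhat x - μ x)) ^ 2 * pX x) =
        (fun x => (ftstar x - μ x) ^ 2 * pX x) := by funext x; ring
    have e2 : (fun x => (μhat x - μ x) ^ 2 * pX x) =
        (fun x => (μ x - μhat x) ^ 2 * pX x) := by funext x; ring
    have mk := minkowski_sq (u := fun x => ftstar x - μhat x)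
      (v := fun x => μhat x - μ x) (w := pX) h𝒳 hpX_nonneg
      (by rw [e1]; exact intf2 ftstar hftstar)
      (intg ftstar hftstar pX hpX_meas hpX_nonneg hpX_int)
      (by rw [e2]; exact hμμhat)
    rw [e1, e2] at mk
    exact mk
  -- Step 2a : ∫ (fstar - μhat)² pX ≤ T ^ 2
  set X0 : ℝ := ∫ x in 𝒳, (fstar x - μhat x) ^ 2 * pX x with hX0def
  have hX0nn : 0 ≤ X0 := setIntegral_nonneg h𝒳 fun x hx =>
    mul_nonneg (sq_nonneg _) (hpX_nonneg x hx)
  have hX0T : X0 ≤ T ^ 2 := by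
    have e1 : (fun x => ((fstar x - μ x) + (μ x - μhat x)) ^ 2 * pX x) =
        (fun x => (fstar x - μhat x) ^ 2 * pX x) := by funext x; ring
    have mk := minkowski_sq (u := fun x => fstar x - μ x)
      (v := fun x => μ x - μhat x) (w := pX) h𝒳 hpX_nonneg
      (by rw [e1]; exact intg fstar hfstar pX hpX_meas hpX_nonneg hpX_int)
      (intf2 fstar hfstar) hμμhat
    rw [e1] at mk
    have : Real.sqrt X0 ≤ T := by
      rw [hTdef]; rw [hX0def]; rw [hAdef, hBdef] at *
      linarith [mk]
    calc X0 = Real.sqrt X0 ^ 2 := (Real.sq_sqrt hX0nn).symm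
      _ ≤ T ^ 2 := by
          have := Real.sqrt_nonneg X0
          nlinarith
  -- Step 2b : change of measure, first application
  set X2 : ℝ := ∫ x in 𝒳, (fstar x - μhat x) ^ 2 * pXt x with hX2def
  have hX2le : ∀ C : ℝ, 0 < C → X2 ≤ C * T ^ 2 + M * C ^ (-d) := by
    intro C hC
    have hcom := change_of_measure (g := fun x => (fstar x - μhat x) ^ 2)
      (w1 := pXt) (w2 := pX) h𝒳 ((hmfs.sub hμhat).pow_const 2) hpXt_meas hpX_meas
      (fun x _ => sq_nonneg _) hpX_nonneg (sq_nonneg U) (hsqbdd fstar hfstar)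
      hpXt_int (intg fstar hfstar pXt hpXt_meas hpXt_nonneg hpXt_int)
      (intg fstar hfstar pX hpX_meas hpX_nonneg hpX_int) hC (hfid C hC).2
    calc X2 ≤ C * X0 + U ^ 2 * (V * C ^ (-d)) := hcom
      _ ≤ C * T ^ 2 + U ^ 2 * (V * C ^ (-d)) := by
          have := mul_le_mul_of_nonneg_left hX0T hC.le
          linarith
      _ = C * T ^ 2 + M * C ^ (-d) := by rw [hMdef]; ring
  have hX2b : X2 ≤ κ * (T ^ 2) ^ (d / (d + 1)) * M ^ (1 / (d + 1)) :=
    opt_lemma d hd (sq_nonneg T) hM0 hX2le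
  set s1 : ℝ := κ * (T ^ 2) ^ (d / (d + 1)) * M ^ (1 / (d + 1)) with hs1def
  have hs10 : 0 ≤ s1 := by
    refine mul_nonneg (mul_nonneg hκpos.le ?_) ?_ <;> exact Real.rpow_nonneg (by positivity) _
  -- Step 2c : second application
  have hEle : ∀ C : ℝ, 0 < C → E ≤ C * s1 + M * C ^ (-d) := by
    intro C hC
    have hcom := change_of_measure (g := fun x => (ftstar x - μhat x) ^ 2)
      (w1 := pX) (w2 := pXt) h𝒳 ((hmft.sub hμhat).pow_const 2) hpX_meas hpXt_meas
      (fun x _ => sq_nonneg _) hpXt_nonneg (sq_nonneg U) (hsqbdd ftstar hftstar)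
      hpX_int (intg ftstar hftstar pX hpX_meas hpX_nonneg hpX_int)
      (intg ftstar hftstar pXt hpXt_meas hpXt_nonneg hpXt_int) hC (hfid C hC).1
    have hmin : (∫ x in 𝒳, (ftstar x - μhat x) ^ 2 * pXt x) ≤ X2 :=
      hftstar_min fstar hfstar
    calc E ≤ C * (∫ x in 𝒳, (ftstar x - μhat x) ^ 2 * pXt x) + U ^ 2 * (V * C ^ (-d)) := hcom
      _ ≤ C * s1 + U ^ 2 * (V * C ^ (-d)) := by
          have h1 : (∫ x in 𝒳, (ftstar x - μhat x) ^ 2 * pXt x) ≤ s1 := hmin.trans hX2b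
          have := mul_le_mul_of_nonneg_left h1 hC.le
          linarith
      _ = C * s1 + M * C ^ (-d) := by rw [hMdef]; ring
  have hEb : E ≤ κ * s1 ^ (d / (d + 1)) * M ^ (1 / (d + 1)) :=
    opt_lemma d hd hs10 hM0 hEle
  -- Step 3 : algebra
  have hκ1 : 1 ≤ κ := by
    rcases le_or_gt 1 d with h1 | h1
    · have h2 : d ^ (0:ℝ) ≤ d ^ (1 / (d + 1)) :=
        Real.rpow_le_rpow_of_exponent_le h1 (by positivity)
      have h3 : 0 < d ^ (-(d / (d + 1))) := Real.rpow_pos_of_pos hd _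
      rw [Real.rpow_zero] at h2
      rw [hκdef]; linarith
    · have h2 : d ^ (0:ℝ) ≤ d ^ (-(d / (d + 1))) :=
        Real.rpow_le_rpow_of_exponent_ge hd h1.le
          (neg_nonpos.2 (by positivity : (0:ℝ) ≤ d / (d + 1)))
      have h3 : 0 < d ^ (1 / (d + 1)) := Real.rpow_pos_of_pos hd _
      rw [Real.rpow_zero] at h2
      rw [hκdef]; linarith
  set KC : ℝ := κ ^ ((3 * d + 1) / (2 * (d + 1))) * V ^ ((2 * d + 1) / (2 * (d + 1) ^ 2))
      * U ^ ((2 * d + 1) / (d + 1) ^ 2) with hKdef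
  have hKTnn : 0 ≤ KC * T ^ (d ^ 2 / (d + 1) ^ 2) :=
    mul_nonneg (mul_nonneg (mul_nonneg (Real.rpow_nonneg hκpos.le _)
      (Real.rpow_nonneg hV _)) (Real.rpow_nonneg hU _)) (Real.rpow_nonneg hT0 _)
  have hfinal : Real.sqrt E ≤ KC * T ^ (d ^ 2 / (d + 1) ^ 2) := by
    rcases eq_or_lt_of_le hM0 with hMz | hMpos
    · have hz : M ^ (1 / (d + 1)) = 0 := by
        rw [← hMz, Real.zero_rpow (by positivity : (0:ℝ) < 1 / (d + 1)).ne']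
      have hE0' : E = 0 := le_antisymm (by rw [hz] at hEb; simpa using hEb) hE0
      rw [hE0', Real.sqrt_zero]; exact hKTnn
    · have hM' : (0:ℝ) < U ^ 2 * V := hMdef ▸ hMpos
      have hU2pos : 0 < U ^ 2 := by
        by_contra h
        push_neg at h
        have := mul_nonpos_of_nonpos_of_nonneg h hV
        linarith
      have hUpos : 0 < U := lt_of_le_of_ne hU (by intro h; rw [← h] at hU2pos; simp at hU2pos)
      have hVpos : 0 < V := by
        by_contra h
        push_neg at h
        have := mul_nonpos_of_nonneg_of_nonpos (sq_nonneg U) h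
        linarith
      rcases eq_or_lt_of_le hT0 with hTz | hTpos
      · have h2 : (T ^ 2 : ℝ) = 0 := by rw [← hTz]; ring
        have hs1z : s1 = 0 := by
          rw [hs1def, h2, Real.zero_rpow (by positivity : (0:ℝ) < d / (d + 1)).ne']
          ring
        have hEle0 : E ≤ 0 := by
          rw [hs1z, Real.zero_rpow (by positivity : (0:ℝ) < d / (d + 1)).ne'] at hEb
          simpa using hEb
        rw [le_antisymm hEle0 hE0, Real.sqrt_zero]; exact hKTnn
      · have hT2pos : (0:ℝ) < T ^ 2 := by positivity
        have hs1pos : 0 < s1 := by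
          rw [hs1def]
          exact mul_pos (mul_pos hκpos (Real.rpow_pos_of_pos hT2pos _))
            (Real.rpow_pos_of_pos hMpos _)
        have hRpos : 0 < κ * s1 ^ (d / (d + 1)) * M ^ (1 / (d + 1)) :=
          mul_pos (mul_pos hκpos (Real.rpow_pos_of_pos hs1pos _))
            (Real.rpow_pos_of_pos hMpos _)
        refine (Real.sqrt_le_sqrt hEb).trans ?_
        have hsqpos : 0 < Real.sqrt (κ * s1 ^ (d / (d + 1)) * M ^ (1 / (d + 1))) :=
          Real.sqrt_pos.2 hRpos
        have hKTpos : 0 < KC * T ^ (d ^ 2 / (d + 1) ^ 2) := by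
          rw [hKdef]
          exact mul_pos (mul_pos (mul_pos (Real.rpow_pos_of_pos hκpos _)
            (Real.rpow_pos_of_pos hVpos _)) (Real.rpow_pos_of_pos hUpos _))
            (Real.rpow_pos_of_pos hTpos _)
        rw [← Real.log_le_log_iff hsqpos hKTpos, Real.log_sqrt hRpos.le]
        have hlogs1 : Real.log s1 =
            Real.log κ + d / (d + 1) * (2 * Real.log T) + 1 / (d + 1) * Real.log M := by
          rw [hs1def, Real.log_mul (mul_pos hκpos (Real.rpow_pos_of_pos hT2pos _)).ne'
              (Real.rpow_pos_of_pos hMpos _).ne',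
            Real.log_mul hκpos.ne' (Real.rpow_pos_of_pos hT2pos _).ne',
            Real.log_rpow hT2pos, Real.log_rpow hMpos, Real.log_pow]
          push_cast; ring
        have hlogM : Real.log M = 2 * Real.log U + Real.log V := by
          rw [hMdef, Real.log_mul (by positivity) hVpos.ne', Real.log_pow]
          push_cast; ring
        rw [Real.log_mul (mul_pos hκpos (Real.rpow_pos_of_pos hs1pos _)).ne'
            (Real.rpow_pos_of_pos hMpos _).ne',
          Real.log_mul hκpos.ne' (Real.rpow_pos_of_pos hs1pos _).ne',
          Real.log_rpow hs1pos, Real.log_rpow hMpos,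
          hKdef, Real.log_mul (by positivity : (κ ^ ((3 * d + 1) / (2 * (d + 1))) *
              V ^ ((2 * d + 1) / (2 * (d + 1) ^ 2)) * U ^ ((2 * d + 1) / (d + 1) ^ 2) :ℝ) ≠ 0)
            (Real.rpow_pos_of_pos hTpos _).ne',
          Real.log_mul (by positivity) (Real.rpow_pos_of_pos hUpos _).ne',
          Real.log_mul (Real.rpow_pos_of_pos hκpos _).ne' (Real.rpow_pos_of_pos hVpos _).ne',
          Real.log_rpow hκpos, Real.log_rpow hVpos, Real.log_rpow hUpos,
          Real.log_rpow hTpos, hlogs1, hlogM]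
        have hlκ : 0 ≤ Real.log κ := Real.log_nonneg hκ1
        have hdiff : ((3 * d + 1) / (2 * (d + 1)) * Real.log κ
              + (2 * d + 1) / (2 * (d + 1) ^ 2) * Real.log V
              + (2 * d + 1) / (d + 1) ^ 2 * Real.log U
              + d ^ 2 / (d + 1) ^ 2 * Real.log T)
            - (Real.log κ
                + d / (d + 1) * (Real.log κ + d / (d + 1) * (2 * Real.log T)
                  + 1 / (d + 1) * (2 * Real.log U + Real.log V))
                + 1 / (d + 1) * (2 * Real.log U + Real.log V)) / 2
            = d / (2 * (d + 1)) * Real.log κ := by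
          field_simp
          ring
        have hc : 0 ≤ d / (2 * (d + 1)) * Real.log κ :=
          mul_nonneg (by positivity) hlκ
        linarith [hdiff, hc]
  -- conclusion
  calc Real.sqrt (∫ x in 𝒳, (ftstar x - μ x) ^ 2 * pX x)
      ≤ Real.sqrt E + Real.sqrt A := step1
    _ ≤ Real.sqrt A + KC * T ^ (d ^ 2 / (d + 1) ^ 2) := by linarith [hfinal]
end
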